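/- arXiv:1811.11906 — 6 statements merged into one kernel-verified Lean document; each statement's English description precedes it below -/
import Mathlib

section
/- There exists a constant C > 0 such that for every ε ∈ (0, 1], every cubic Hermite interpolant P of F on [−ε, ε], and every a ∈ [−ε, ε], one has ‖P(a) − F(0)‖ ≤ C·ε. -/
private lemma cubic_deriv_eq {E : Type*} [NormedAddCommGroup E] [NormedSpace ℝ E]
    (c : Fin 4 → E) (P : ℝ → E)
    (hP : ∀ a : ℝ, P a = ∑ j : Fin 4, a ^ (j : ℕ) • c j) (x : ℝ) :
    deriv P x = c 1 + (2 * x) • c 2 + (3 * x ^ 2) • c 3 := by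
  have hPeq : P = fun a : ℝ => c 0 + a • c 1 + a ^ 2 • c 2 + a ^ 3 • c 3 := by
    funext a
    rw [hP a, Fin.sum_univ_four]
    simp [pow_one]
  rw [hPeq]
  have h0 : HasDerivAt (fun _ : ℝ => c 0) 0 x := hasDerivAt_const x (c 0)
  have h1 : HasDerivAt (fun a : ℝ => a • c 1) ((1 : ℝ) • c 1) x :=
    (hasDerivAt_id x).smul_const (c 1)
  have h2 : HasDerivAt (fun a : ℝ => a ^ 2 • c 2) (((2 : ℕ) * x ^ 1 : ℝ) • c 2) x :=
    (hasDerivAt_pow 2 x).smul_const (c 2)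
  have h3 : HasDerivAt (fun a : ℝ => a ^ 3 • c 3) (((3 : ℕ) * x ^ 2 : ℝ) • c 3) x :=
    (hasDerivAt_pow 3 x).smul_const (c 3)
  have h := ((h0.add h1).add h2).add h3
  have : deriv (fun a : ℝ => c 0 + a • c 1 + a ^ 2 • c 2 + a ^ 3 • c 3) x = _ := h.deriv
  rw [this]
  push_cast
  module

private lemma cubic_repr {E : Type*} [NormedAddCommGroup E] [NormedSpace ℝ E]
    (c : Fin 4 → E) (P : ℝ → E)
    (hP : ∀ a : ℝ, P a = ∑ j : Fin 4, a ^ (j : ℕ) • c j)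
    (ε : ℝ) (hε : ε ≠ 0) (a : ℝ) (v : E) :
    P a - v =
      ((1 + 2 * ((a + ε) / (2 * ε))) * (1 - (a + ε) / (2 * ε)) ^ 2) • (P (-ε) - v)
      + (((a + ε) / (2 * ε)) ^ 2 * (3 - 2 * ((a + ε) / (2 * ε)))) • (P ε - v)
      + ((2 * ε) * ((a + ε) / (2 * ε)) * (1 - (a + ε) / (2 * ε)) ^ 2) • deriv P (-ε)
      + ((2 * ε) * ((a + ε) / (2 * ε)) ^ 2 * ((a + ε) / (2 * ε) - 1)) • deriv P ε := by
  rw [cubic_deriv_eq c P hP, cubic_deriv_eq c P hP, hP a, hP (-ε), hP ε]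
  simp only [Fin.sum_univ_four, show ((0 : Fin 4) : ℕ) = 0 from rfl,
    show ((1 : Fin 4) : ℕ) = 1 from rfl, show ((2 : Fin 4) : ℕ) = 2 from rfl,
    show ((3 : Fin 4) : ℕ) = 3 from rfl]
  match_scalars <;> field_simp <;> ring

/-- **Zeroth-order estimate for cubic Hermite smoothing (Lemma `firstorder`, part 1).**
Let `g₋, g₊ : ℝ → E` be `C²` with `g₋ 0 = g₊ 0`, and let `F` agree with `g₋` on `(-∞,0]`
and with `g₊` on `[0,∞)`. Then there is a constant `C > 0` such that for every
`ε ∈ (0,1]`, every cubic Hermite interpolant `P` of `F` on `[−ε, ε]` (a polynomial of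
degree at most 3 with `P(±ε) = F(±ε)`, `P'(-ε) = g₋'(-ε)`, `P'(ε) = g₊'(ε)`), and every
`a ∈ [−ε, ε]`, one has `‖P a − F 0‖ ≤ C·ε`. -/
theorem cubic_hermite_value_estimate
    {E : Type*} [NormedAddCommGroup E] [NormedSpace ℝ E]
    (gm gp : ℝ → E) (hgm : ContDiff ℝ 2 gm) (hgp : ContDiff ℝ 2 gp)
    (h0 : gm 0 = gp 0)
    (F : ℝ → E) (hFm : ∀ a : ℝ, a ≤ 0 → F a = gm a) (hFp : ∀ a : ℝ, 0 ≤ a → F a = gp a) :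
    ∃ C > 0, ∀ ε ∈ Set.Ioc (0 : ℝ) 1, ∀ P : ℝ → E,
      ((∃ c : Fin 4 → E, ∀ a : ℝ, P a = ∑ j : Fin 4, a ^ (j : ℕ) • c j) ∧
        P (-ε) = F (-ε) ∧ P ε = F ε ∧
        deriv P (-ε) = deriv gm (-ε) ∧ deriv P ε = deriv gp ε) →
      ∀ a ∈ Set.Icc (-ε) ε, ‖P a - F 0‖ ≤ C * ε := by
  obtain ⟨M1, hM1⟩ := (isCompact_Icc (a := (-1 : ℝ)) (b := 1)).exists_bound_of_continuousOn
    ((hgm.continuous_deriv one_le_two).continuousOn)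
  obtain ⟨M2, hM2⟩ := (isCompact_Icc (a := (-1 : ℝ)) (b := 1)).exists_bound_of_continuousOn
    ((hgp.continuous_deriv one_le_two).continuousOn)
  have hM1nn : 0 ≤ M1 := le_trans (norm_nonneg _) (hM1 0 (by norm_num))
  have hM2nn : 0 ≤ M2 := le_trans (norm_nonneg _) (hM2 0 (by norm_num))
  refine ⟨3 * (M1 + M2) + 1, by linarith, ?_⟩
  rintro ε ⟨hε0, hε1⟩ P ⟨⟨c, hc⟩, hPm, hPp, hdm, hdp⟩ a ⟨ham, hap⟩
  have hεne : ε ≠ 0 := ne_of_gt hε0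
  rw [cubic_repr c P hc ε hεne a (F 0)]
  set t : ℝ := (a + ε) / (2 * ε) with ht
  clear_value t
  have ht0 : 0 ≤ t := by
    rw [ht]; apply div_nonneg <;> linarith
  have ht1 : t ≤ 1 := by
    rw [ht, div_le_one (by linarith)]; linarith
  -- bounds on the Hermite basis coefficients
  have k1 : 0 ≤ t ^ 2 * (3 - 2 * t) := by nlinarith [sq_nonneg t]
  have k2 : t ^ 2 * (3 - 2 * t) ≤ 1 := by nlinarith [sq_nonneg (1 - t), sq_nonneg t]
  have k3 : 0 ≤ (1 + 2 * t) * (1 - t) ^ 2 := by nlinarith [sq_nonneg (1 - t)]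
  have k4 : (1 + 2 * t) * (1 - t) ^ 2 ≤ 1 := by nlinarith [sq_nonneg t, sq_nonneg (1 - t)]
  have k5 : 0 ≤ t * (1 - t) ^ 2 := mul_nonneg ht0 (sq_nonneg _)
  have k6 : t * (1 - t) ^ 2 ≤ 1 := by nlinarith [sq_nonneg (1 - t)]
  have k7 : 0 ≤ t ^ 2 * (1 - t) := by nlinarith [sq_nonneg t]
  have k8 : t ^ 2 * (1 - t) ≤ 1 := by nlinarith [sq_nonneg t]
  have hA : |(1 + 2 * t) * (1 - t) ^ 2| ≤ 1 := by rw [abs_le]; constructor <;> linarith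
  have hB : |t ^ 2 * (3 - 2 * t)| ≤ 1 := by rw [abs_le]; constructor <;> linarith
  have hC : |(2 * ε) * t * (1 - t) ^ 2| ≤ 2 * ε := by
    rw [abs_le]
    have e5 : 2 * ε * t * (1 - t) ^ 2 = (2 * ε) * (t * (1 - t) ^ 2) := by ring
    constructor <;> rw [e5] <;> linarith [mul_nonneg (by linarith : (0:ℝ) ≤ 2 * ε) k5,
      mul_le_mul_of_nonneg_left k6 (by linarith : (0:ℝ) ≤ 2 * ε)]
  have hD : |(2 * ε) * t ^ 2 * (t - 1)| ≤ 2 * ε := by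
    rw [abs_le]
    have e5 : 2 * ε * t ^ 2 * (t - 1) = -((2 * ε) * (t ^ 2 * (1 - t))) := by ring
    constructor <;> rw [e5] <;> linarith [mul_nonneg (by linarith : (0:ℝ) ≤ 2 * ε) k7,
      mul_le_mul_of_nonneg_left k8 (by linarith : (0:ℝ) ≤ 2 * ε)]
  -- bounds on the data
  have hF0 : F 0 = gm 0 := hFm 0 le_rfl
  have hF0' : F 0 = gp 0 := by rw [hF0, h0]
  have hsub : Convex ℝ (Set.Icc (-1 : ℝ) 1) := convex_Icc _ _
  have hgmd : ∀ x ∈ Set.Icc (-1 : ℝ) 1, DifferentiableAt ℝ gm x :=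
    fun x _ => (hgm.differentiable two_ne_zero).differentiableAt
  have hgpd : ∀ x ∈ Set.Icc (-1 : ℝ) 1, DifferentiableAt ℝ gp x :=
    fun x _ => (hgp.differentiable two_ne_zero).differentiableAt
  have hmem : (-ε : ℝ) ∈ Set.Icc (-1 : ℝ) 1 := ⟨by linarith, by linarith⟩
  have hmem' : (ε : ℝ) ∈ Set.Icc (-1 : ℝ) 1 := ⟨by linarith, by linarith⟩
  have hmem0 : (0 : ℝ) ∈ Set.Icc (-1 : ℝ) 1 := ⟨by norm_num, by norm_num⟩
  have b1 : ‖P (-ε) - F 0‖ ≤ M1 * ε := by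
    rw [hPm, hFm (-ε) (by linarith), hF0]
    have := hsub.norm_image_sub_le_of_norm_deriv_le hgmd hM1 hmem0 hmem
    calc ‖gm (-ε) - gm 0‖ ≤ M1 * ‖(-ε : ℝ) - 0‖ := this
      _ = M1 * ε := by rw [sub_zero, norm_neg, Real.norm_of_nonneg hε0.le]
  have b2 : ‖P ε - F 0‖ ≤ M2 * ε := by
    rw [hPp, hFp ε hε0.le, hF0']
    have := hsub.norm_image_sub_le_of_norm_deriv_le hgpd hM2 hmem0 hmem'
    calc ‖gp ε - gp 0‖ ≤ M2 * ‖(ε : ℝ) - 0‖ := this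
      _ = M2 * ε := by rw [sub_zero, Real.norm_of_nonneg hε0.le]
  have b3 : ‖deriv P (-ε)‖ ≤ M1 := by rw [hdm]; exact hM1 _ hmem
  have b4 : ‖deriv P ε‖ ≤ M2 := by rw [hdp]; exact hM2 _ hmem'
  have key : ∀ (x y z w : E), ‖x + y + z + w‖ ≤ ‖x‖ + ‖y‖ + ‖z‖ + ‖w‖ := by
    intro x y z w
    calc ‖x + y + z + w‖ ≤ ‖x + y + z‖ + ‖w‖ := norm_add_le _ _
      _ ≤ (‖x + y‖ + ‖z‖) + ‖w‖ := by gcongr; exact norm_add_le _ _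
      _ ≤ (‖x‖ + ‖y‖ + ‖z‖) + ‖w‖ := by gcongr; exact norm_add_le _ _
  refine le_trans (key _ _ _ _) ?_
  simp only [norm_smul, Real.norm_eq_abs]
  have e1 : |(1 + 2 * t) * (1 - t) ^ 2| * ‖P (-ε) - F 0‖ ≤ 1 * (M1 * ε) := by
    apply mul_le_mul hA b1 (norm_nonneg _) one_pos.le
  have e2 : |t ^ 2 * (3 - 2 * t)| * ‖P ε - F 0‖ ≤ 1 * (M2 * ε) := by
    apply mul_le_mul hB b2 (norm_nonneg _) one_pos.le
  have e3 : |2 * ε * t * (1 - t) ^ 2| * ‖deriv P (-ε)‖ ≤ (2 * ε) * M1 := by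
    apply mul_le_mul hC b3 (norm_nonneg _) (by linarith)
  have e4 : |2 * ε * t ^ 2 * (t - 1)| * ‖deriv P ε‖ ≤ (2 * ε) * M2 := by
    apply mul_le_mul hD b4 (norm_nonneg _) (by linarith)
  linarith
end

section
/- There exists a constant C > 0 such that for every ε ∈ (0, 1], every cubic Hermite interpolant P of F on [−ε, ε], and every a ∈ [−ε, ε], one has ‖P'(a) − ( ((ε − a)/(2ε)) • g₋'(−ε) + ((ε + a)/(2ε)) • g₊'(ε) )‖ ≤ C·ε. -/
open Set

private lemma taylor_aux {E : Type*} [NormedAddCommGroup E] [NormedSpace ℝ E]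
    (g : ℝ → E) (hg : ContDiff ℝ 2 g) :
    ∃ M ≥ (0:ℝ), ∀ x ∈ Set.Icc (-1:ℝ) 1, ∀ y ∈ Set.Icc (-1:ℝ) 1,
      ‖g y - g x - (y - x) • deriv g x‖ ≤ M * (y - x) ^ 2 := by
  have hg' : ContDiff ℝ (1 + 1) g := by exact_mod_cast hg
  have hg1 : ContDiff ℝ 1 (deriv g) := (contDiff_succ_iff_deriv.mp hg').2.2
  have hdd : Continuous (deriv (deriv g)) := hg1.continuous_deriv le_rfl
  have hd1 : Differentiable ℝ (deriv g) := hg1.differentiable one_ne_zero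
  have hdg : Differentiable ℝ g := hg.differentiable (by norm_num)
  obtain ⟨M0, hM0⟩ :=
    (isCompact_Icc (a := (-1:ℝ)) (b := 1)).exists_bound_of_continuousOn hdd.continuousOn
  set M := max M0 0 with hMdef
  have hM : ∀ x ∈ Set.Icc (-1:ℝ) 1, ‖deriv (deriv g) x‖ ≤ M :=
    fun x hx => (hM0 x hx).trans (le_max_left _ _)
  refine ⟨M, le_max_right _ _, ?_⟩
  intro x hx y hy
  have lip : ∀ u ∈ Set.Icc (-1:ℝ) 1, ∀ v ∈ Set.Icc (-1:ℝ) 1,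
      ‖deriv g v - deriv g u‖ ≤ M * ‖v - u‖ := fun u hu v hv =>
    (convex_Icc _ _).norm_image_sub_le_of_norm_deriv_le
      (fun z _ => hd1 z) (fun z hz => hM z hz) hu hv
  have hsub : Set.uIcc x y ⊆ Set.Icc (-1:ℝ) 1 := uIcc_subset_Icc hx hy
  have key : ∀ t ∈ Set.uIcc x y,
      HasDerivWithinAt (fun t => g t - t • deriv g x) (deriv g t - deriv g x) (Set.uIcc x y) t := by
    intro t ht
    exact (((hdg t).hasDerivAt.sub ((hasDerivAt_id t).smul_const (deriv g x))).congr_deriv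
      (by simp)).hasDerivWithinAt
  have bound : ∀ t ∈ Set.uIcc x y, ‖deriv g t - deriv g x‖ ≤ M * |y - x| := by
    intro t ht
    refine (lip x hx t (hsub ht)).trans ?_
    have hMnn : (0:ℝ) ≤ M := le_max_right _ _
    have : |t - x| ≤ |y - x| := by
      have := Real.dist_le_of_mem_uIcc ht (Set.left_mem_uIcc (a := x) (b := y))
      rw [Real.dist_eq, Real.dist_eq, abs_sub_comm x y] at this
      exact this
    have := mul_le_mul_of_nonneg_left this hMnn
    simpa [Real.norm_eq_abs] using this
  have := (convex_uIcc x y).norm_image_sub_le_of_norm_hasDerivWithin_le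
      key bound (Set.left_mem_uIcc) (Set.right_mem_uIcc)
  have heq : (g y - y • deriv g x) - (g x - x • deriv g x)
      = g y - g x - (y - x) • deriv g x := by
    rw [sub_smul]; abel
  rw [heq] at this
  refine this.trans ?_
  rw [Real.norm_eq_abs, sq, ← abs_mul_self (y - x), abs_mul, mul_assoc]

private lemma sum_expand {E : Type*} [NormedAddCommGroup E] [NormedSpace ℝ E]
    (c : Fin 4 → E) (x : ℝ) :
    (∑ j : Fin 4, x ^ (j:ℕ) • c j)
      = x ^ 0 • c 0 + x ^ 1 • c 1 + x ^ 2 • c 2 + x ^ 3 • c 3 := by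
  simp [Fin.sum_univ_four, show ((3:Fin 4):ℕ) = 3 from rfl, show ((2:Fin 4):ℕ) = 2 from rfl]

private lemma hasDerivAt_cubic {E : Type*} [NormedAddCommGroup E] [NormedSpace ℝ E]
    (c : Fin 4 → E) (P : ℝ → E)
    (hPeq : P = fun x : ℝ => x ^ 0 • c 0 + x ^ 1 • c 1 + x ^ 2 • c 2 + x ^ 3 • c 3)
    (x : ℝ) : HasDerivAt P (c 1 + (2 * x) • c 2 + (3 * x ^ 2) • c 3) x := by
  rw [hPeq]
  have h0' := (hasDerivAt_pow 0 x).smul_const (c 0)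
  have h1' := (hasDerivAt_pow 1 x).smul_const (c 1)
  have h2' := (hasDerivAt_pow 2 x).smul_const (c 2)
  have h3' := (hasDerivAt_pow 3 x).smul_const (c 3)
  have := ((h0'.add h1').add h2').add h3'
  convert this using 1
  · rfl
  have e0 : ((0:ℕ) * x ^ (0 - 1) : ℝ) = 0 := by norm_num
  have e1 : ((1:ℕ) * x ^ (1 - 1) : ℝ) = 1 := by norm_num
  have e2 : ((2:ℕ) * x ^ (2 - 1) : ℝ) = 2 * x := by norm_num
  have e3 : ((3:ℕ) * x ^ (3 - 1) : ℝ) = 3 * x ^ 2 := by norm_num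
  rw [e0, e1, e2, e3]
  module

private lemma key1_aux {E : Type*} [NormedAddCommGroup E] [NormedSpace ℝ E] (c : Fin 4 → E)
    (ε a : ℝ) (hεne : ε ≠ 0) :
    (c 1 + (2 * a) • c 2 + (3 * a ^ 2) • c 3) -
      (((ε - a) / (2 * ε)) • (c 1 + (2 * (-ε)) • c 2 + (3 * (-ε) ^ 2) • c 3)
        + ((ε + a) / (2 * ε)) • (c 1 + (2 * ε) • c 2 + (3 * ε ^ 2) • c 3))
      = (3 * a ^ 2 - 3 * ε ^ 2) • c 3 := by
  match_scalars <;> field_simp <;> ring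

private lemma key2_aux {E : Type*} [NormedAddCommGroup E] [NormedSpace ℝ E]
    (c : Fin 4 → E) (ε : ℝ) :
    (4 * ε ^ 3) • c 3
      = ε • (c 1 + (2 * (-ε)) • c 2 + (3 * (-ε) ^ 2) • c 3)
        + ε • (c 1 + (2 * ε) • c 2 + (3 * ε ^ 2) • c 3)
        + ((-ε) ^ 0 • c 0 + (-ε) ^ 1 • c 1 + (-ε) ^ 2 • c 2 + (-ε) ^ 3 • c 3)
        - (ε ^ 0 • c 0 + ε ^ 1 • c 1 + ε ^ 2 • c 2 + ε ^ 3 • c 3) := by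
  module

private lemma hw_aux {E : Type*} [NormedAddCommGroup E] [NormedSpace ℝ E]
    (gm gp : ℝ → E) (ε : ℝ) (h0 : gm 0 = gp 0) :
    ε • deriv gm (-ε) + ε • deriv gp ε + gm (-ε) - gp ε
      = -(gm 0 - gm (-ε) - (0 - -ε) • deriv gm (-ε))
        + (gp 0 - gp ε - (0 - ε) • deriv gp ε) := by
  rw [h0]
  module

private lemma final_aux (M₁ M₂ C ε a t : ℝ) (hKC : M₁ + M₂ ≤ C) (hε0 : 0 < ε)
    (ht : 0 ≤ t) (h4 : 4 * ε ^ 3 * t ≤ (M₁ + M₂) * ε ^ 2) (ha2' : a ^ 2 ≤ ε ^ 2) :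
    (3 * ε ^ 2 - 3 * a ^ 2) * t ≤ C * ε := by
  nlinarith [mul_nonneg (mul_nonneg (by positivity : (0:ℝ) ≤ 3 * a ^ 2) hε0.le) ht,
    mul_le_mul_of_nonneg_right hKC (sq_nonneg ε), mul_nonneg (mul_nonneg ht hε0.le) hε0.le,
    mul_pos hε0 hε0]

/-- **First-order estimate for cubic Hermite smoothing (Lemma `firstorder`, part 2).**
With `g₋, g₊, F` as before, there is `C > 0` such that for every `ε ∈ (0,1]`, every
cubic Hermite interpolant `P` of `F` on `[−ε, ε]`, and every `a ∈ [−ε, ε]`,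
`‖P'(a) − ( ((ε − a)/(2ε)) • g₋'(−ε) + ((ε + a)/(2ε)) • g₊'(ε) )‖ ≤ C·ε`. -/
theorem cubic_hermite_deriv_estimate
    {E : Type*} [NormedAddCommGroup E] [NormedSpace ℝ E]
    (gm gp : ℝ → E) (hgm : ContDiff ℝ 2 gm) (hgp : ContDiff ℝ 2 gp)
    (h0 : gm 0 = gp 0)
    (F : ℝ → E) (hFm : ∀ a : ℝ, a ≤ 0 → F a = gm a) (hFp : ∀ a : ℝ, 0 ≤ a → F a = gp a) :
    ∃ C > 0, ∀ ε ∈ Set.Ioc (0 : ℝ) 1, ∀ P : ℝ → E,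
      ((∃ c : Fin 4 → E, ∀ a : ℝ, P a = ∑ j : Fin 4, a ^ (j : ℕ) • c j) ∧
        P (-ε) = F (-ε) ∧ P ε = F ε ∧
        deriv P (-ε) = deriv gm (-ε) ∧ deriv P ε = deriv gp ε) →
      ∀ a ∈ Set.Icc (-ε) ε,
        ‖deriv P a -
            (((ε - a) / (2 * ε)) • deriv gm (-ε) + ((ε + a) / (2 * ε)) • deriv gp ε)‖
          ≤ C * ε := by
  obtain ⟨M₁, hM₁0, hM₁⟩ := taylor_aux gm hgm
  obtain ⟨M₂, hM₂0, hM₂⟩ := taylor_aux gp hgp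
  refine ⟨max 1 (M₁ + M₂), lt_of_lt_of_le one_pos (le_max_left _ _), ?_⟩
  set C := max 1 (M₁ + M₂) with hC
  have hKC : M₁ + M₂ ≤ C := le_max_right _ _
  rintro ε ⟨hε0, hε1⟩ P ⟨⟨c, hc⟩, hPm, hPp, hdm, hdp⟩ a ⟨ha1, ha2⟩
  have hεne : ε ≠ 0 := ne_of_gt hε0
  have hPeq : P = fun x : ℝ => x ^ 0 • c 0 + x ^ 1 • c 1 + x ^ 2 • c 2 + x ^ 3 • c 3 := by
    funext x
    rw [hc, sum_expand]
  have hP' : ∀ x : ℝ, HasDerivAt P (c 1 + (2 * x) • c 2 + (3 * x ^ 2) • c 3) x :=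
    hasDerivAt_cubic c P hPeq
  have hE3 : deriv gm (-ε) = c 1 + (2 * (-ε)) • c 2 + (3 * (-ε) ^ 2) • c 3 := by
    rw [← hdm, (hP' (-ε)).deriv]
  have hE4 : deriv gp ε = c 1 + (2 * ε) • c 2 + (3 * ε ^ 2) • c 3 := by
    rw [← hdp, (hP' ε).deriv]
  have key1 : deriv P a -
      (((ε - a) / (2 * ε)) • deriv gm (-ε) + ((ε + a) / (2 * ε)) • deriv gp ε)
      = (3 * a ^ 2 - 3 * ε ^ 2) • c 3 := by
    rw [(hP' a).deriv, hE3, hE4]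
    exact key1_aux c ε a hεne
  have hE1 : gm (-ε) = (-ε) ^ 0 • c 0 + (-ε) ^ 1 • c 1 + (-ε) ^ 2 • c 2 + (-ε) ^ 3 • c 3 := by
    rw [← hFm (-ε) (by linarith), ← hPm, hPeq]
  have hE2 : gp ε = ε ^ 0 • c 0 + ε ^ 1 • c 1 + ε ^ 2 • c 2 + ε ^ 3 • c 3 := by
    rw [← hFp ε hε0.le, ← hPp, hPeq]
  have key2 : (4 * ε ^ 3) • c 3
      = ε • deriv gm (-ε) + ε • deriv gp ε + gm (-ε) - gp ε := by
    rw [hE1, hE2, hE3, hE4]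
    exact key2_aux c ε
  have hw := hw_aux gm gp ε h0
  have hmem1 : (-ε) ∈ Set.Icc (-1:ℝ) 1 := ⟨by linarith, by linarith⟩
  have hmem2 : ε ∈ Set.Icc (-1:ℝ) 1 := ⟨by linarith, by linarith⟩
  have hmem0 : (0:ℝ) ∈ Set.Icc (-1:ℝ) 1 := ⟨by linarith, by linarith⟩
  have hA := hM₁ (-ε) hmem1 0 hmem0
  have hB := hM₂ ε hmem2 0 hmem0
  have hwn : ‖(4 * ε ^ 3) • c 3‖ ≤ (M₁ + M₂) * ε ^ 2 := by
    rw [key2, hw]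
    refine (norm_add_le _ _).trans ?_
    rw [norm_neg]
    have e : (0 - -ε) ^ 2 = ε ^ 2 := by ring
    have e' : (0 - ε) ^ 2 = ε ^ 2 := by ring
    rw [e] at hA
    rw [e'] at hB
    linarith [hA, hB]
  have ht : (0:ℝ) ≤ ‖c 3‖ := norm_nonneg _
  have h4 : 4 * ε ^ 3 * ‖c 3‖ ≤ (M₁ + M₂) * ε ^ 2 := by
    rw [norm_smul, Real.norm_eq_abs, abs_of_nonneg (by positivity : (0:ℝ) ≤ 4 * ε ^ 3)] at hwn
    linarith
  rw [key1, norm_smul, Real.norm_eq_abs]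
  have ha2' : a ^ 2 ≤ ε ^ 2 := sq_le_sq' ha1 ha2
  have habs : |3 * a ^ 2 - 3 * ε ^ 2| = 3 * ε ^ 2 - 3 * a ^ 2 := by
    rw [abs_of_nonpos (by nlinarith [sq_nonneg a, ha2'])]
    ring
  rw [habs]
  exact final_aux M₁ M₂ C ε a ‖c 3‖ hKC hε0 ht h4 ha2'
end

section
/- There exists a constant C > 0 such that for every ε ∈ (0, 1], every quintic Hermite interpolant P of F on [−ε, ε], and every a ∈ [−ε, ε], one has ‖P(a) − F(0)‖ ≤ C·ε. -/
lemma six_term_bound {E : Type*} [NormedAddCommGroup E] [NormedSpace ℝ E]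
    (q1 q2 q3 q4 q5 q6 B : ℝ) (u1 u2 u3 u4 u5 u6 x : E)
    (hx : x = q1 • u1 + q2 • u2 + q3 • u3 + q4 • u4 + q5 • u5 + q6 • u6)
    (h1 : |q1| * ‖u1‖ ≤ B) (h2 : |q2| * ‖u2‖ ≤ B) (h3 : |q3| * ‖u3‖ ≤ B)
    (h4 : |q4| * ‖u4‖ ≤ B) (h5 : |q5| * ‖u5‖ ≤ B) (h6 : |q6| * ‖u6‖ ≤ B) :
    ‖x‖ ≤ 6 * B := by
  have n1 := norm_add_le (q1 • u1 + q2 • u2 + q3 • u3 + q4 • u4 + q5 • u5) (q6 • u6)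
  have n2 := norm_add_le (q1 • u1 + q2 • u2 + q3 • u3 + q4 • u4) (q5 • u5)
  have n3 := norm_add_le (q1 • u1 + q2 • u2 + q3 • u3) (q4 • u4)
  have n4 := norm_add_le (q1 • u1 + q2 • u2) (q3 • u3)
  have n5 := norm_add_le (q1 • u1) (q2 • u2)
  have e1 : ‖q1 • u1‖ = |q1| * ‖u1‖ := by rw [norm_smul, Real.norm_eq_abs]
  have e2 : ‖q2 • u2‖ = |q2| * ‖u2‖ := by rw [norm_smul, Real.norm_eq_abs]
  have e3 : ‖q3 • u3‖ = |q3| * ‖u3‖ := by rw [norm_smul, Real.norm_eq_abs]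
  have e4 : ‖q4 • u4‖ = |q4| * ‖u4‖ := by rw [norm_smul, Real.norm_eq_abs]
  have e5 : ‖q5 • u5‖ = |q5| * ‖u5‖ := by rw [norm_smul, Real.norm_eq_abs]
  have e6 : ‖q6 • u6‖ = |q6| * ‖u6‖ := by rw [norm_smul, Real.norm_eq_abs]
  rw [hx]
  linarith [h1, h2, h3, h4, h5, h6]

set_option maxHeartbeats 2000000 in
/-- **Zeroth-order estimate for quintic Hermite smoothing (Lemma `secondorder`, part 1).**
Let `g₋, g₊ : ℝ → E` be `C³` with `g₋ 0 = g₊ 0` and `g₋'(0) = g₊'(0)`, and let `F`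
agree with `g₋` on `(-∞,0]` and with `g₊` on `[0,∞)` (so `F` is `C¹`). Then there is
`C > 0` such that for every `ε ∈ (0,1]`, every quintic Hermite interpolant `P` of `F`
on `[−ε, ε]` (a polynomial of degree at most 5 with `P(±ε) = F(±ε)`,
`P'(-ε) = g₋'(-ε)`, `P'(ε) = g₊'(ε)`, `P''(-ε) = g₋''(-ε)`, `P''(ε) = g₊''(ε)`),
and every `a ∈ [−ε, ε]`, one has `‖P a − F 0‖ ≤ C·ε`. -/
theorem quintic_hermite_value_estimate
    {E : Type*} [NormedAddCommGroup E] [NormedSpace ℝ E]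
    (gm gp : ℝ → E) (hgm : ContDiff ℝ 3 gm) (hgp : ContDiff ℝ 3 gp)
    (h0 : gm 0 = gp 0) (h1 : deriv gm 0 = deriv gp 0)
    (F : ℝ → E) (hFm : ∀ a : ℝ, a ≤ 0 → F a = gm a) (hFp : ∀ a : ℝ, 0 ≤ a → F a = gp a) :
    ∃ C > 0, ∀ ε ∈ Set.Ioc (0 : ℝ) 1, ∀ P : ℝ → E,
      ((∃ c : Fin 6 → E, ∀ a : ℝ, P a = ∑ j : Fin 6, a ^ (j : ℕ) • c j) ∧
        P (-ε) = F (-ε) ∧ P ε = F ε ∧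
        deriv P (-ε) = deriv gm (-ε) ∧ deriv P ε = deriv gp ε ∧
        iteratedDeriv 2 P (-ε) = iteratedDeriv 2 gm (-ε) ∧
        iteratedDeriv 2 P ε = iteratedDeriv 2 gp ε) →
      ∀ a ∈ Set.Icc (-ε) ε, ‖P a - F 0‖ ≤ C * ε := by
  -- continuity facts
  have hgmd : Differentiable ℝ gm := hgm.differentiable (by norm_num)
  have hgpd : Differentiable ℝ gp := hgp.differentiable (by norm_num)
  obtain ⟨M1, hM1⟩ := isCompact_Icc.exists_bound_of_continuousOn
    (s := Set.Icc (-1:ℝ) 1) (hgm.continuous_deriv (by norm_num)).continuousOn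
  obtain ⟨M2, hM2⟩ := isCompact_Icc.exists_bound_of_continuousOn
    (s := Set.Icc (-1:ℝ) 1) (hgp.continuous_deriv (by norm_num)).continuousOn
  obtain ⟨M3, hM3⟩ := isCompact_Icc.exists_bound_of_continuousOn
    (s := Set.Icc (-1:ℝ) 1) (hgm.continuous_iteratedDeriv 2 (by norm_num)).continuousOn
  obtain ⟨M4, hM4⟩ := isCompact_Icc.exists_bound_of_continuousOn
    (s := Set.Icc (-1:ℝ) 1) (hgp.continuous_iteratedDeriv 2 (by norm_num)).continuousOn
  set M : ℝ := max 1 (max (max M1 M2) (max M3 M4)) with hMdef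
  have hM1' : (1:ℝ) ≤ M := le_max_left _ _
  have hMpos : (0:ℝ) < M := lt_of_lt_of_le one_pos hM1'
  have bM1 : ∀ x ∈ Set.Icc (-1:ℝ) 1, ‖deriv gm x‖ ≤ M := fun x hx =>
    (hM1 x hx).trans ((le_max_left _ _).trans ((le_max_left _ _).trans (le_max_right _ _)))
  have bM2 : ∀ x ∈ Set.Icc (-1:ℝ) 1, ‖deriv gp x‖ ≤ M := fun x hx =>
    (hM2 x hx).trans ((le_max_right _ _).trans ((le_max_left _ _).trans (le_max_right _ _)))
  have bM3 : ∀ x ∈ Set.Icc (-1:ℝ) 1, ‖iteratedDeriv 2 gm x‖ ≤ M := fun x hx =>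
    (hM3 x hx).trans ((le_max_left _ _).trans ((le_max_right _ _).trans (le_max_right _ _)))
  have bM4 : ∀ x ∈ Set.Icc (-1:ℝ) 1, ‖iteratedDeriv 2 gp x‖ ≤ M := fun x hx =>
    (hM4 x hx).trans ((le_max_right _ _).trans ((le_max_right _ _).trans (le_max_right _ _)))
  refine ⟨36 * M, by positivity, ?_⟩
  rintro ε ⟨hε0, hε1⟩ P ⟨⟨c, hc⟩, hPm, hPp, hQm, hQp, hRm, hRp⟩ a ⟨ha1, ha2⟩
  have hPfun : P = fun x : ℝ => ∑ j : Fin 6, x ^ (j : ℕ) • c j := funext hc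
  subst hPfun
  have hεmem : -ε ∈ Set.Icc (-1:ℝ) 1 := ⟨by linarith, by linarith⟩
  have hεmem' : ε ∈ Set.Icc (-1:ℝ) 1 := ⟨by linarith, by linarith⟩
  have h0mem : (0:ℝ) ∈ Set.Icc (-1:ℝ) 1 := ⟨by norm_num, by norm_num⟩
  -- derivatives of the polynomial
  have hD1 : ∀ x : ℝ, HasDerivAt (fun x : ℝ => ∑ j : Fin 6, x ^ (j : ℕ) • c j)
      (∑ j : Fin 6, (((j : ℕ) : ℝ) * x ^ ((j : ℕ) - 1)) • c j) x := fun x =>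
    HasDerivAt.fun_sum fun (j : Fin 6) _ => (hasDerivAt_pow (j : ℕ) x).smul_const (c j)
  have hd1 : deriv (fun x : ℝ => ∑ j : Fin 6, x ^ (j : ℕ) • c j)
      = fun x : ℝ => ∑ j : Fin 6, (((j : ℕ) : ℝ) * x ^ ((j : ℕ) - 1)) • c j :=
    funext fun x => (hD1 x).deriv
  have hD2 : ∀ x : ℝ, HasDerivAt
      (fun x : ℝ => ∑ j : Fin 6, (((j : ℕ) : ℝ) * x ^ ((j : ℕ) - 1)) • c j)
      (∑ j : Fin 6, (((j : ℕ) : ℝ) * ((((j : ℕ) - 1 : ℕ) : ℝ) * x ^ ((j : ℕ) - 1 - 1))) • c j)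
      x := fun x =>
    HasDerivAt.fun_sum fun (j : Fin 6) _ =>
      (((hasDerivAt_pow ((j : ℕ) - 1) x).const_mul (((j : ℕ) : ℝ)))).smul_const (c j)
  have hd2 : ∀ x : ℝ, iteratedDeriv 2 (fun x : ℝ => ∑ j : Fin 6, x ^ (j : ℕ) • c j) x
      = ∑ j : Fin 6, (((j : ℕ) : ℝ) * ((((j : ℕ) - 1 : ℕ) : ℝ) * x ^ ((j : ℕ) - 1 - 1))) • c j := by
    intro x
    rw [iteratedDeriv_succ, iteratedDeriv_one, hd1]
    exact (hD2 x).deriv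
  rw [hd1] at hQm hQp
  rw [hd2] at hRm hRp
  simp only [Fin.sum_univ_six, show ((0:Fin 6):ℕ) = 0 from rfl, show ((1:Fin 6):ℕ) = 1 from rfl,
    show ((2:Fin 6):ℕ) = 2 from rfl, show ((3:Fin 6):ℕ) = 3 from rfl,
    show ((4:Fin 6):ℕ) = 4 from rfl, show ((5:Fin 6):ℕ) = 5 from rfl]
    at hPm hPp hQm hQp hRm hRp
  norm_num at hPm hPp hQm hQp hRm hRp
  -- the six interpolation equations solved for the (scaled) coefficients
  have key0 : c 0 - F 0 = (1/2 : ℝ) • (F (-ε) - F 0) + (1/2 : ℝ) • (F ε - F 0)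
      + (5/16*ε) • deriv gm (-ε) + (-(5/16)*ε) • deriv gp ε
      + (1/16*ε^2) • iteratedDeriv 2 gm (-ε) + (1/16*ε^2) • iteratedDeriv 2 gp ε := by
    rw [← hPm, ← hPp, ← hQm, ← hQp, ← hRm, ← hRp]; module
  have key1 : ε • c 1 = (-(15/16) : ℝ) • (F (-ε) - F 0) + ((15/16) : ℝ) • (F ε - F 0)
      + (-(7/16)*ε) • deriv gm (-ε) + (-(7/16)*ε) • deriv gp ε
      + (-(1/16)*ε^2) • iteratedDeriv 2 gm (-ε) + (1/16*ε^2) • iteratedDeriv 2 gp ε := by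
    rw [← hPm, ← hPp, ← hQm, ← hQp, ← hRm, ← hRp]; module
  have key2 : ε^2 • c 2 = (0 : ℝ) • (F (-ε) - F 0) + (0 : ℝ) • (F ε - F 0)
      + (-(3/8)*ε) • deriv gm (-ε) + ((3/8)*ε) • deriv gp ε
      + (-(1/8)*ε^2) • iteratedDeriv 2 gm (-ε) + (-(1/8)*ε^2) • iteratedDeriv 2 gp ε := by
    rw [← hQm, ← hQp, ← hRm, ← hRp]; module
  have key3 : ε^3 • c 3 = ((5/8) : ℝ) • (F (-ε) - F 0) + (-(5/8) : ℝ) • (F ε - F 0)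
      + ((5/8)*ε) • deriv gm (-ε) + ((5/8)*ε) • deriv gp ε
      + ((1/8)*ε^2) • iteratedDeriv 2 gm (-ε) + (-(1/8)*ε^2) • iteratedDeriv 2 gp ε := by
    rw [← hPm, ← hPp, ← hQm, ← hQp, ← hRm, ← hRp]; module
  have key4 : ε^4 • c 4 = (0 : ℝ) • (F (-ε) - F 0) + (0 : ℝ) • (F ε - F 0)
      + ((1/16)*ε) • deriv gm (-ε) + (-(1/16)*ε) • deriv gp ε
      + ((1/16)*ε^2) • iteratedDeriv 2 gm (-ε) + ((1/16)*ε^2) • iteratedDeriv 2 gp ε := by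
    rw [← hQm, ← hQp, ← hRm, ← hRp]; module
  have key5 : ε^5 • c 5 = (-(3/16) : ℝ) • (F (-ε) - F 0) + ((3/16) : ℝ) • (F ε - F 0)
      + (-(3/16)*ε) • deriv gm (-ε) + (-(3/16)*ε) • deriv gp ε
      + (-(1/16)*ε^2) • iteratedDeriv 2 gm (-ε) + (1/16*ε^2) • iteratedDeriv 2 gp ε := by
    rw [← hPm, ← hPp, ← hQm, ← hQp, ← hRm, ← hRp]; module
  -- norm bounds on the data
  have hu0 : ‖F (-ε) - F 0‖ ≤ M * ε := by
    rw [hFm (-ε) (by linarith), hFm 0 le_rfl]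
    have := Convex.norm_image_sub_le_of_norm_deriv_le (f := gm) (fun x _ => hgmd x) bM1
      (convex_Icc (-1:ℝ) 1) h0mem hεmem
    simpa [Real.norm_eq_abs, abs_of_pos hε0] using this
  have hu1 : ‖F ε - F 0‖ ≤ M * ε := by
    rw [hFp ε (by linarith), hFp 0 le_rfl]
    have := Convex.norm_image_sub_le_of_norm_deriv_le (f := gp) (fun x _ => hgpd x) bM2
      (convex_Icc (-1:ℝ) 1) h0mem hεmem'
    simpa [Real.norm_eq_abs, abs_of_pos hε0] using this
  have hv2 : ‖deriv gm (-ε)‖ ≤ M := bM1 _ hεmem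
  have hv3 : ‖deriv gp ε‖ ≤ M := bM2 _ hεmem'
  have hw4 : ‖iteratedDeriv 2 gm (-ε)‖ ≤ M := bM3 _ hεmem
  have hw5 : ‖iteratedDeriv 2 gp ε‖ ≤ M := bM4 _ hεmem'
  -- generic coefficient estimates
  have habs : ∀ q : ℝ, |q| ≤ 1 → ∀ u : E, ‖u‖ ≤ M * ε → |q| * ‖u‖ ≤ M * ε := by
    intro q hq u hu
    calc |q| * ‖u‖ ≤ 1 * ‖u‖ := mul_le_mul_of_nonneg_right hq (norm_nonneg u)
      _ = ‖u‖ := one_mul _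
      _ ≤ M * ε := hu
  have habs2 : ∀ q : ℝ, |q| ≤ 1 → ∀ v : E, ‖v‖ ≤ M → |q * ε| * ‖v‖ ≤ M * ε := by
    intro q hq v hv
    rw [abs_mul, abs_of_pos hε0]
    calc |q| * ε * ‖v‖ ≤ 1 * ε * ‖v‖ :=
        mul_le_mul_of_nonneg_right (mul_le_mul_of_nonneg_right hq hε0.le) (norm_nonneg v)
      _ = ε * ‖v‖ := by ring
      _ ≤ ε * M := mul_le_mul_of_nonneg_left hv hε0.le
      _ = M * ε := by ring
  have habs3 : ∀ q : ℝ, |q| ≤ 1 → ∀ w : E, ‖w‖ ≤ M → |q * ε^2| * ‖w‖ ≤ M * ε := by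
    intro q hq w hw
    rw [abs_mul, abs_of_pos (pow_pos hε0 2)]
    calc |q| * ε^2 * ‖w‖ ≤ 1 * ε^2 * ‖w‖ :=
        mul_le_mul_of_nonneg_right (mul_le_mul_of_nonneg_right hq (by positivity)) (norm_nonneg w)
      _ = ε^2 * ‖w‖ := by ring
      _ ≤ ε^2 * M := mul_le_mul_of_nonneg_left hw (by positivity)
      _ ≤ ε * M := mul_le_mul_of_nonneg_right (by nlinarith) hMpos.le
      _ = M * ε := by ring
  have hd0 := six_term_bound _ _ _ _ _ _ _ _ _ _ _ _ _ _ key0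
    (habs (1/2) (by rw [abs_le]; norm_num) _ hu0) (habs (1/2) (by rw [abs_le]; norm_num) _ hu1)
    (habs2 (5/16) (by rw [abs_le]; norm_num) _ hv2) (habs2 (-(5/16)) (by rw [abs_le]; norm_num) _ hv3)
    (habs3 (1/16) (by rw [abs_le]; norm_num) _ hw4) (habs3 (1/16) (by rw [abs_le]; norm_num) _ hw5)
  have hd1 := six_term_bound _ _ _ _ _ _ _ _ _ _ _ _ _ _ key1
    (habs (-(15/16)) (by rw [abs_le]; norm_num) _ hu0) (habs (15/16) (by rw [abs_le]; norm_num) _ hu1)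
    (habs2 (-(7/16)) (by rw [abs_le]; norm_num) _ hv2) (habs2 (-(7/16)) (by rw [abs_le]; norm_num) _ hv3)
    (habs3 (-(1/16)) (by rw [abs_le]; norm_num) _ hw4) (habs3 (1/16) (by rw [abs_le]; norm_num) _ hw5)
  have hd2 := six_term_bound _ _ _ _ _ _ _ _ _ _ _ _ _ _ key2
    (habs 0 (by rw [abs_le]; norm_num) _ hu0) (habs 0 (by rw [abs_le]; norm_num) _ hu1)
    (habs2 (-(3/8)) (by rw [abs_le]; norm_num) _ hv2) (habs2 (3/8) (by rw [abs_le]; norm_num) _ hv3)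
    (habs3 (-(1/8)) (by rw [abs_le]; norm_num) _ hw4) (habs3 (-(1/8)) (by rw [abs_le]; norm_num) _ hw5)
  have hd3 := six_term_bound _ _ _ _ _ _ _ _ _ _ _ _ _ _ key3
    (habs (5/8) (by rw [abs_le]; norm_num) _ hu0) (habs (-(5/8)) (by rw [abs_le]; norm_num) _ hu1)
    (habs2 (5/8) (by rw [abs_le]; norm_num) _ hv2) (habs2 (5/8) (by rw [abs_le]; norm_num) _ hv3)
    (habs3 (1/8) (by rw [abs_le]; norm_num) _ hw4) (habs3 (-(1/8)) (by rw [abs_le]; norm_num) _ hw5)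
  have hd4 := six_term_bound _ _ _ _ _ _ _ _ _ _ _ _ _ _ key4
    (habs 0 (by rw [abs_le]; norm_num) _ hu0) (habs 0 (by rw [abs_le]; norm_num) _ hu1)
    (habs2 (1/16) (by rw [abs_le]; norm_num) _ hv2) (habs2 (-(1/16)) (by rw [abs_le]; norm_num) _ hv3)
    (habs3 (1/16) (by rw [abs_le]; norm_num) _ hw4) (habs3 (1/16) (by rw [abs_le]; norm_num) _ hw5)
  have hd5 := six_term_bound _ _ _ _ _ _ _ _ _ _ _ _ _ _ key5
    (habs (-(3/16)) (by rw [abs_le]; norm_num) _ hu0) (habs (3/16) (by rw [abs_le]; norm_num) _ hu1)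
    (habs2 (-(3/16)) (by rw [abs_le]; norm_num) _ hv2) (habs2 (-(3/16)) (by rw [abs_le]; norm_num) _ hv3)
    (habs3 (-(1/16)) (by rw [abs_le]; norm_num) _ hw4) (habs3 (1/16) (by rw [abs_le]; norm_num) _ hw5)
  -- transfer from ε-scaled bounds to bounds at the point a
  have ha' : |a| ≤ ε := abs_le.mpr ⟨ha1, ha2⟩
  have tgen : ∀ (n : ℕ) (v : E), ‖ε^n • v‖ ≤ 6*(M*ε) → ‖a^n • v‖ ≤ 6*(M*ε) := by
    intro n v hv
    rw [norm_smul, Real.norm_eq_abs] at hv ⊢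
    have h1 : |a^n| ≤ |ε^n| := by
      rw [abs_pow, abs_pow, abs_of_pos hε0]
      exact pow_le_pow_left₀ (abs_nonneg a) ha' n
    exact le_trans (mul_le_mul_of_nonneg_right h1 (norm_nonneg v)) hv
  have t1 : ‖a • c 1‖ ≤ 6*(M*ε) := by
    have := tgen 1 (c 1) (by simpa using hd1)
    simpa using this
  have t2 : ‖a^2 • c 2‖ ≤ 6*(M*ε) := tgen 2 (c 2) hd2
  have t3 : ‖a^3 • c 3‖ ≤ 6*(M*ε) := tgen 3 (c 3) hd3
  have t4 : ‖a^4 • c 4‖ ≤ 6*(M*ε) := tgen 4 (c 4) hd4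
  have t5 : ‖a^5 • c 5‖ ≤ 6*(M*ε) := tgen 5 (c 5) hd5
  have keyP : (∑ j : Fin 6, a ^ (j : ℕ) • c j) - F 0 = (1:ℝ) • (c 0 - F 0)
      + (1:ℝ) • (a • c 1) + (1:ℝ) • (a^2 • c 2) + (1:ℝ) • (a^3 • c 3)
      + (1:ℝ) • (a^4 • c 4) + (1:ℝ) • (a^5 • c 5) := by
    simp only [Fin.sum_univ_six, show ((0:Fin 6):ℕ) = 0 from rfl, show ((1:Fin 6):ℕ) = 1 from rfl,
      show ((2:Fin 6):ℕ) = 2 from rfl, show ((3:Fin 6):ℕ) = 3 from rfl,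
      show ((4:Fin 6):ℕ) = 4 from rfl, show ((5:Fin 6):ℕ) = 5 from rfl]
    module
  have final := six_term_bound _ _ _ _ _ _ _ _ _ _ _ _ _ _ keyP
    (by simpa using hd0) (by simpa using t1) (by simpa using t2)
    (by simpa using t3) (by simpa using t4) (by simpa using t5)
  show ‖(∑ j : Fin 6, a ^ (j : ℕ) • c j) - F 0‖ ≤ 36 * M * ε
  calc ‖(∑ j : Fin 6, a ^ (j : ℕ) • c j) - F 0‖ ≤ 6 * (6 * (M * ε)) := final
    _ = 36 * M * ε := by ring
end

section
/- There exists a constant C > 0 such that for every ε ∈ (0, 1], every quintic Hermite interpolant P of F on [−ε, ε], and every a ∈ [−ε, ε], one has ‖P'(a) − g₊'(0)‖ ≤ C·ε (note g₊'(0) = g₋'(0) is the common derivative of F at 0). -/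
open Set

private lemma quintic_hermite_aux_c3 {E : Type*} [NormedAddCommGroup E] [NormedSpace ℝ E]
    {f : ℝ → E} (hf : ContDiff ℝ 3 f) :
    Differentiable ℝ f ∧ Differentiable ℝ (deriv f) ∧ Continuous (deriv (deriv f)) := by
  have h3 : ContDiff ℝ ((2:ℕ) + 1) f := by exact_mod_cast hf
  obtain ⟨hd, -, h2⟩ := contDiff_succ_iff_deriv.mp h3
  have h2' : ContDiff ℝ ((1:ℕ) + 1) (deriv f) := by exact_mod_cast h2
  obtain ⟨hd2, -, h1⟩ := contDiff_succ_iff_deriv.mp h2'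
  exact ⟨hd, hd2, h1.continuous⟩

private lemma quintic_hermite_taylor {E : Type*} [NormedAddCommGroup E] [NormedSpace ℝ E]
    {g : ℝ → E} (hgd : Differentiable ℝ g) {M a b : ℝ} (hM : 1 ≤ M)
    (hab : a ≤ b) (hε : max |a| |b| ≤ 1) {v : E} (hv : v = deriv g 0)
    (lip : ∀ x ∈ Icc (-1:ℝ) 1, ‖deriv g x - deriv g 0‖ ≤ M * |x|) :
    ‖(g b - b • v) - (g a - a • v)‖ ≤ (M * max |a| |b|) * (b - a) := by
  have key := Convex.norm_image_sub_le_of_norm_hasDerivWithin_le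
    (f := fun x => g x - x • v) (f' := fun x => deriv g x - v) (s := Icc a b)
    (C := M * max |a| |b|)
    (fun x _ => by
      have h := ((hgd x).hasDerivAt.sub ((hasDerivAt_id x).smul_const v))
      exact (by convert h using 1 <;> [rfl; simp] : HasDerivAt (fun x => g x - x • v) (deriv g x - v) x).hasDerivWithinAt)
    (fun x hx => by
      have hx1 : x ∈ Icc (-1:ℝ) 1 := by
        constructor
        · have := le_max_left |a| |b|; have := abs_le.mp (le_trans (le_max_left |a| |b|) hε)
          cases abs_le.mp (le_trans (le_max_left |a| |b|) hε) with
          | intro h1 h2 => exact le_trans h1 hx.1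
        · cases abs_le.mp (le_trans (le_max_right |a| |b|) hε) with
          | intro h1 h2 => exact le_trans hx.2 h2
      have hl := lip x hx1
      rw [← hv] at hl
      have hax : |x| ≤ max |a| |b| := by
        rcases le_or_gt 0 x with h | h
        · exact le_trans (by rw [abs_of_nonneg h]; exact le_trans hx.2 (le_abs_self b))
            (le_max_right _ _)
        · exact le_trans (by rw [abs_of_neg h]; exact le_trans (neg_le_neg hx.1) (neg_le_abs a))
            (le_max_left _ _)
      show ‖deriv g x - v‖ ≤ M * max |a| |b|
      nlinarith [abs_nonneg x])
    (convex_Icc _ _) (left_mem_Icc.mpr hab) (right_mem_Icc.mpr hab)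
  have heq : (fun x => g x - x • v) b - (fun x => g x - x • v) a
      = (g b - b • v) - (g a - a • v) := by simp
  rw [heq] at key
  have : ‖b - a‖ = b - a := by rw [Real.norm_eq_abs, abs_of_nonneg (by linarith)]
  rwa [this] at key

set_option maxHeartbeats 1000000 in
/-- **First-order estimate for quintic Hermite smoothing (Lemma `secondorder`, part 2).**
With `g₋, g₊, F` as before (`C³`, matching value and first derivative at `0`), there is
`C > 0` such that for every `ε ∈ (0,1]`, every quintic Hermite interpolant `P` of `F`
on `[−ε, ε]`, and every `a ∈ [−ε, ε]`, `‖P'(a) − g₊'(0)‖ ≤ C·ε` (where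
`g₊'(0) = g₋'(0)` is the common derivative of `F` at `0`). -/
theorem quintic_hermite_deriv_estimate
    {E : Type*} [NormedAddCommGroup E] [NormedSpace ℝ E]
    (gm gp : ℝ → E) (hgm : ContDiff ℝ 3 gm) (hgp : ContDiff ℝ 3 gp)
    (h0 : gm 0 = gp 0) (h1 : deriv gm 0 = deriv gp 0)
    (F : ℝ → E) (hFm : ∀ a : ℝ, a ≤ 0 → F a = gm a) (hFp : ∀ a : ℝ, 0 ≤ a → F a = gp a) :
    ∃ C > 0, ∀ ε ∈ Set.Ioc (0 : ℝ) 1, ∀ P : ℝ → E,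
      ((∃ c : Fin 6 → E, ∀ a : ℝ, P a = ∑ j : Fin 6, a ^ (j : ℕ) • c j) ∧
        P (-ε) = F (-ε) ∧ P ε = F ε ∧
        deriv P (-ε) = deriv gm (-ε) ∧ deriv P ε = deriv gp ε ∧
        iteratedDeriv 2 P (-ε) = iteratedDeriv 2 gm (-ε) ∧
        iteratedDeriv 2 P ε = iteratedDeriv 2 gp ε) →
      ∀ a ∈ Set.Icc (-ε) ε, ‖deriv P a - deriv gp 0‖ ≤ C * ε := by
  obtain ⟨hgpd, hgpd2, hgpc2⟩ := quintic_hermite_aux_c3 hgp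
  obtain ⟨hgmd, hgmd2, hgmc2⟩ := quintic_hermite_aux_c3 hgm
  obtain ⟨M1, hM1⟩ := (isCompact_Icc (a := (-1:ℝ)) (b := 1)).exists_bound_of_continuousOn
    hgpc2.continuousOn
  obtain ⟨M2, hM2⟩ := (isCompact_Icc (a := (-1:ℝ)) (b := 1)).exists_bound_of_continuousOn
    hgmc2.continuousOn
  set M : ℝ := max (max M1 M2) 1 with hMdef
  have hM : (1:ℝ) ≤ M := le_max_right _ _
  have hMp : ∀ x ∈ Icc (-1:ℝ) 1, ‖deriv (deriv gp) x‖ ≤ M :=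
    fun x hx => (hM1 x hx).trans (le_trans (le_max_left _ _) (le_max_left _ _))
  have hMm : ∀ x ∈ Icc (-1:ℝ) 1, ‖deriv (deriv gm) x‖ ≤ M :=
    fun x hx => (hM2 x hx).trans (le_trans (le_max_right _ _) (le_max_left _ _))
  -- Lipschitz bounds for the derivatives
  have lipp : ∀ x ∈ Icc (-1:ℝ) 1, ‖deriv gp x - deriv gp 0‖ ≤ M * |x| := by
    intro x hx
    have := Convex.norm_image_sub_le_of_norm_deriv_le (f := deriv gp) (s := Icc (-1:ℝ) 1)
      (fun y _ => hgpd2 y) hMp (convex_Icc _ _) (⟨by norm_num, by norm_num⟩ : (0:ℝ) ∈ Icc (-1:ℝ) 1) hx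
    simpa using this
  have lipm : ∀ x ∈ Icc (-1:ℝ) 1, ‖deriv gm x - deriv gm 0‖ ≤ M * |x| := by
    intro x hx
    have := Convex.norm_image_sub_le_of_norm_deriv_le (f := deriv gm) (s := Icc (-1:ℝ) 1)
      (fun y _ => hgmd2 y) hMm (convex_Icc _ _) (⟨by norm_num, by norm_num⟩ : (0:ℝ) ∈ Icc (-1:ℝ) 1) hx
    simpa using this
  have hit : ∀ f : ℝ → E, iteratedDeriv 2 f = deriv (deriv f) := by
    intro f
    rw [show (2:ℕ) = 1 + 1 from rfl, iteratedDeriv_succ, iteratedDeriv_one]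
  refine ⟨29 * M, by linarith, ?_⟩
  rintro ε ⟨hε0, hε1⟩ P ⟨⟨c, hc⟩, hPm, hPp, hDm, hDp, hIm, hIp⟩
  set v : E := deriv gp 0 with hv
  have hεm : ε ∈ Icc (-1:ℝ) 1 := ⟨by linarith, hε1⟩
  have hεm' : -ε ∈ Icc (-1:ℝ) 1 := ⟨by linarith, by linarith⟩
  -- data error bounds
  have nBp : ‖deriv gp ε - v‖ ≤ M * ε := by
    have := lipp ε hεm; rwa [abs_of_pos hε0] at this
  have nBm : ‖deriv gm (-ε) - v‖ ≤ M * ε := by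
    have := lipm (-ε) hεm'
    rw [h1, abs_neg, abs_of_pos hε0] at this
    exact this
  have nZp : ‖iteratedDeriv 2 gp ε‖ ≤ M := by rw [hit]; exact hMp ε hεm
  have nZm : ‖iteratedDeriv 2 gm (-ε)‖ ≤ M := by rw [hit]; exact hMm (-ε) hεm'
  have habs : max |(0:ℝ)| |ε| ≤ 1 := by
    rw [abs_of_pos hε0]; simp [abs_of_pos hε0]; linarith
  have hmaxp : max |(0:ℝ)| |ε| = ε := by
    rw [abs_zero, abs_of_pos hε0, max_eq_right (le_of_lt hε0)]
  have hmaxm : max |(-ε)| |(0:ℝ)| = ε := by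
    rw [abs_zero, abs_neg, abs_of_pos hε0, max_eq_left (le_of_lt hε0)]
  have nTp : ‖gp ε - ε • v - gp 0‖ ≤ M * ε * ε := by
    have h3 := quintic_hermite_taylor hgpd hM (le_of_lt hε0)
      (by rw [hmaxp]; exact hε1) hv lipp
    rw [hmaxp] at h3
    simpa using h3
  have nTm : ‖gm (-ε) + ε • v - gm 0‖ ≤ M * ε * ε := by
    have hvm : v = deriv gm 0 := by rw [hv, h1]
    have h3 := quintic_hermite_taylor hgmd hM (show -ε ≤ (0:ℝ) by linarith)
      (by rw [hmaxm]; exact hε1) hvm lipm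
    rw [hmaxm] at h3
    have heq : (gm 0 - (0:ℝ) • v) - (gm (-ε) - (-ε) • v) = -(gm (-ε) + ε • v - gm 0) := by
      module
    rw [heq, norm_neg] at h3
    calc ‖gm (-ε) + ε • v - gm 0‖ ≤ M * ε * (0 - -ε) := h3
      _ = M * ε * ε := by ring
  have nA : ‖gp ε - gm (-ε) - (2*ε) • v‖ ≤ 2 * (M * ε * ε) := by
    have heq : gp ε - gm (-ε) - (2*ε) • v
        = (gp ε - ε • v - gp 0) - (gm (-ε) + ε • v - gm 0) := by
      rw [h0]; module
    rw [heq]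
    exact (norm_sub_le _ _).trans (by linarith)
  -- polynomial structure
  have hPe : P = fun a => c 0 + a • c 1 + (a^2) • c 2 + (a^3) • c 3 + (a^4) • c 4 + (a^5) • c 5 := by
    funext a
    rw [hc]
    norm_num [Fin.sum_univ_six]
  have hP1 : ∀ a : ℝ, HasDerivAt P
      (c 1 + (2*a) • c 2 + (3*a^2) • c 3 + (4*a^3) • c 4 + (5*a^4) • c 5) a := by
    intro a
    rw [hPe]
    have h0' : HasDerivAt (fun _ : ℝ => c 0) 0 a := hasDerivAt_const a _
    have h1' : HasDerivAt (fun x : ℝ => x • c 1) ((1:ℝ) • c 1) a := (hasDerivAt_id a).smul_const _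
    have h2' : HasDerivAt (fun x : ℝ => (x^2) • c 2) ((2*a^1) • c 2) a := by
      simpa using (hasDerivAt_pow 2 a).smul_const (c 2)
    have h3' : HasDerivAt (fun x : ℝ => (x^3) • c 3) ((3*a^2) • c 3) a := by
      simpa using (hasDerivAt_pow 3 a).smul_const (c 3)
    have h4' : HasDerivAt (fun x : ℝ => (x^4) • c 4) ((4*a^3) • c 4) a := by
      simpa using (hasDerivAt_pow 4 a).smul_const (c 4)
    have h5' : HasDerivAt (fun x : ℝ => (x^5) • c 5) ((5*a^4) • c 5) a := by
      simpa using (hasDerivAt_pow 5 a).smul_const (c 5)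
    have := ((((h0'.add h1').add h2').add h3').add h4').add h5'
    convert this using 1
    · rfl
    module
  have hD1 : deriv P = fun a =>
      c 1 + (2*a) • c 2 + (3*a^2) • c 3 + (4*a^3) • c 4 + (5*a^4) • c 5 :=
    funext fun a => (hP1 a).deriv
  have hP2 : ∀ a : ℝ, HasDerivAt (fun a : ℝ =>
      c 1 + (2*a) • c 2 + (3*a^2) • c 3 + (4*a^3) • c 4 + (5*a^4) • c 5)
      ((2:ℝ) • c 2 + (6*a) • c 3 + (12*a^2) • c 4 + (20*a^3) • c 5) a := by
    intro a
    have h1' : HasDerivAt (fun _ : ℝ => c 1) 0 a := hasDerivAt_const a _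
    have h2' : HasDerivAt (fun x : ℝ => (2*x) • c 2) (((2:ℝ)*1) • c 2) a := by
      simpa using ((hasDerivAt_id a).const_mul (2:ℝ)).smul_const (c 2)
    have h3' : HasDerivAt (fun x : ℝ => (3*x^2) • c 3) ((3*(2*a^1)) • c 3) a := by
      simpa using ((hasDerivAt_pow 2 a).const_mul 3).smul_const (c 3)
    have h4' : HasDerivAt (fun x : ℝ => (4*x^3) • c 4) ((4*(3*a^2)) • c 4) a := by
      simpa using ((hasDerivAt_pow 3 a).const_mul 4).smul_const (c 4)
    have h5' : HasDerivAt (fun x : ℝ => (5*x^4) • c 5) ((5*(4*a^3)) • c 5) a := by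
      simpa using ((hasDerivAt_pow 4 a).const_mul 5).smul_const (c 5)
    have := (((h1'.add h2').add h3').add h4').add h5'
    convert this using 1
    · rfl
    module
  have hD2 : ∀ x : ℝ, iteratedDeriv 2 P x
      = (2:ℝ) • c 2 + (6*x) • c 3 + (12*x^2) • c 4 + (20*x^3) • c 5 := by
    intro x
    rw [hit, hD1]
    exact (hP2 x).deriv
  -- the six interpolation equations
  have EQ1 : c 0 + ε • c 1 + (ε^2) • c 2 + (ε^3) • c 3 + (ε^4) • c 4 + (ε^5) • c 5 = gp ε := by
    have h := hPp
    rw [hFp ε (le_of_lt hε0)] at h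
    simp only [hPe] at h
    exact h
  have EQ2 : c 0 + (-ε) • c 1 + ((-ε)^2) • c 2 + ((-ε)^3) • c 3 + ((-ε)^4) • c 4
      + ((-ε)^5) • c 5 = gm (-ε) := by
    have h := hPm
    rw [hFm (-ε) (by linarith)] at h
    simp only [hPe] at h
    exact h
  have EQ3 : c 1 + (2*ε) • c 2 + (3*ε^2) • c 3 + (4*ε^3) • c 4 + (5*ε^4) • c 5 = deriv gp ε := by
    have h := hDp
    simp only [hD1] at h
    exact h
  have EQ4 : c 1 + (2*(-ε)) • c 2 + (3*(-ε)^2) • c 3 + (4*(-ε)^3) • c 4 + (5*(-ε)^4) • c 5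
      = deriv gm (-ε) := by
    have h := hDm
    simp only [hD1] at h
    exact h
  have EQ5 : (2:ℝ) • c 2 + (6*ε) • c 3 + (12*ε^2) • c 4 + (20*ε^3) • c 5
      = iteratedDeriv 2 gp ε := by
    rw [← hIp, hD2]
  have EQ6 : (2:ℝ) • c 2 + (6*(-ε)) • c 3 + (12*(-ε)^2) • c 4 + (20*(-ε)^3) • c 5
      = iteratedDeriv 2 gm (-ε) := by
    rw [← hIm, hD2]
  -- solve the linear system (scaled coefficients)
  have k5 : (ε^5) • c 5 = (16:ℝ)⁻¹ • ((ε^2) • (iteratedDeriv 2 gp ε - iteratedDeriv 2 gm (-ε))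
      - (3*ε) • ((deriv gp ε - v) + (deriv gm (-ε) - v))
      + (3:ℝ) • (gp ε - gm (-ε) - (2*ε) • v)) := by
    rw [← EQ1, ← EQ2, ← EQ3, ← EQ4, ← EQ5, ← EQ6]; module
  have k3 : (ε^3) • c 3 = (4:ℝ)⁻¹ • (ε • ((deriv gp ε - v) + (deriv gm (-ε) - v))
      - (gp ε - gm (-ε) - (2*ε) • v) - (8:ℝ) • ((ε^5) • c 5)) := by
    rw [← EQ1, ← EQ2, ← EQ3, ← EQ4]; module
  have k1 : ε • (c 1 - v) = (2:ℝ)⁻¹ • (gp ε - gm (-ε) - (2*ε) • v)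
      - (ε^3) • c 3 - (ε^5) • c 5 := by
    rw [← EQ1, ← EQ2]; module
  have k4 : (ε^3) • c 4 = (16:ℝ)⁻¹ • (ε • (iteratedDeriv 2 gp ε + iteratedDeriv 2 gm (-ε))
      - ((deriv gp ε - v) - (deriv gm (-ε) - v))) := by
    rw [← EQ3, ← EQ4, ← EQ5, ← EQ6]; module
  have k2 : ε • c 2 = (4:ℝ)⁻¹ • (((deriv gp ε - v) - (deriv gm (-ε) - v))
      - (8:ℝ) • ((ε^3) • c 4)) := by
    rw [← EQ3, ← EQ4]; module
  -- norm bounds on scaled coefficients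
  have nsmul : ∀ (r : ℝ) (x : E), 0 ≤ r → ‖r • x‖ = r * ‖x‖ := fun r x hr => by
    rw [norm_smul, Real.norm_eq_abs, abs_of_nonneg hr]
  have tri3 : ∀ x y z : E, ‖x - y + z‖ ≤ ‖x‖ + ‖y‖ + ‖z‖ := fun x y z =>
    (norm_add_le _ _).trans (add_le_add (norm_sub_le _ _) le_rfl)
  have tri3' : ∀ x y z : E, ‖x - y - z‖ ≤ ‖x‖ + ‖y‖ + ‖z‖ := fun x y z =>
    (norm_sub_le _ _).trans (add_le_add (norm_sub_le _ _) le_rfl)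
  have hMe2 : (0:ℝ) ≤ M * ε^2 := by positivity
  have hMe : (0:ℝ) ≤ M * ε := by positivity
  have n5 : ε^5 * ‖c 5‖ ≤ M * ε^2 := by
    rw [← nsmul _ _ (by positivity), k5, nsmul _ _ (by norm_num)]
    have t := tri3 ((ε^2) • (iteratedDeriv 2 gp ε - iteratedDeriv 2 gm (-ε)))
      ((3*ε) • ((deriv gp ε - v) + (deriv gm (-ε) - v)))
      ((3:ℝ) • (gp ε - gm (-ε) - (2*ε) • v))
    have b1 : ‖(ε^2) • (iteratedDeriv 2 gp ε - iteratedDeriv 2 gm (-ε))‖ ≤ 2 * (M * ε^2) := by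
      calc ‖(ε^2) • (iteratedDeriv 2 gp ε - iteratedDeriv 2 gm (-ε))‖
          = ε^2 * ‖iteratedDeriv 2 gp ε - iteratedDeriv 2 gm (-ε)‖ := nsmul _ _ (by positivity)
        _ ≤ ε^2 * (2*M) := mul_le_mul_of_nonneg_left
            ((norm_sub_le _ _).trans (by linarith)) (by positivity)
        _ = 2 * (M * ε^2) := by ring
    have b2 : ‖(3*ε) • ((deriv gp ε - v) + (deriv gm (-ε) - v))‖ ≤ 6 * (M * ε^2) := by
      calc ‖(3*ε) • ((deriv gp ε - v) + (deriv gm (-ε) - v))‖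
          = (3*ε) * ‖(deriv gp ε - v) + (deriv gm (-ε) - v)‖ := nsmul _ _ (by positivity)
        _ ≤ (3*ε) * (2*(M*ε)) := mul_le_mul_of_nonneg_left
            ((norm_add_le _ _).trans (by linarith)) (by positivity)
        _ = 6 * (M * ε^2) := by ring
    have b3 : ‖(3:ℝ) • (gp ε - gm (-ε) - (2*ε) • v)‖ ≤ 6 * (M * ε^2) := by
      calc ‖(3:ℝ) • (gp ε - gm (-ε) - (2*ε) • v)‖
          = 3 * ‖gp ε - gm (-ε) - (2*ε) • v‖ := nsmul _ _ (by norm_num)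
        _ ≤ 3 * (2 * (M * ε * ε)) := mul_le_mul_of_nonneg_left nA (by norm_num)
        _ = 6 * (M * ε^2) := by ring
    linarith
  have n3 : ε^3 * ‖c 3‖ ≤ 3 * M * ε^2 := by
    rw [← nsmul _ _ (by positivity), k3, nsmul _ _ (by norm_num)]
    have t := tri3' (ε • ((deriv gp ε - v) + (deriv gm (-ε) - v)))
      (gp ε - gm (-ε) - (2*ε) • v) ((8:ℝ) • ((ε^5) • c 5))
    have b1 : ‖ε • ((deriv gp ε - v) + (deriv gm (-ε) - v))‖ ≤ 2 * (M * ε^2) := by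
      calc ‖ε • ((deriv gp ε - v) + (deriv gm (-ε) - v))‖
          = ε * ‖(deriv gp ε - v) + (deriv gm (-ε) - v)‖ := nsmul _ _ (le_of_lt hε0)
        _ ≤ ε * (2*(M*ε)) := mul_le_mul_of_nonneg_left
            ((norm_add_le _ _).trans (by linarith)) (le_of_lt hε0)
        _ = 2 * (M * ε^2) := by ring
    have b2 : ‖gp ε - gm (-ε) - (2*ε) • v‖ ≤ 2 * (M * ε^2) := by
      calc ‖gp ε - gm (-ε) - (2*ε) • v‖ ≤ 2 * (M * ε * ε) := nA
        _ = 2 * (M * ε^2) := by ring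
    have b3 : ‖(8:ℝ) • ((ε^5) • c 5)‖ ≤ 8 * (M * ε^2) := by
      calc ‖(8:ℝ) • ((ε^5) • c 5)‖ = 8 * ‖(ε^5) • c 5‖ := nsmul _ _ (by norm_num)
        _ = 8 * (ε^5 * ‖c 5‖) := by rw [nsmul _ _ (by positivity)]
        _ ≤ 8 * (M * ε^2) := by linarith
    linarith
  have n1 : ‖c 1 - v‖ ≤ 5 * M * ε := by
    have h : ε * ‖c 1 - v‖ ≤ ε * (5 * M * ε) := by
      have he : ε * ‖c 1 - v‖ = ‖ε • (c 1 - v)‖ := (nsmul _ _ (le_of_lt hε0)).symm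
      rw [he, k1]
      have t := tri3' ((2:ℝ)⁻¹ • (gp ε - gm (-ε) - (2*ε) • v)) ((ε^3) • c 3) ((ε^5) • c 5)
      have b1 : ‖(2:ℝ)⁻¹ • (gp ε - gm (-ε) - (2*ε) • v)‖ ≤ M * ε^2 := by
        calc ‖(2:ℝ)⁻¹ • (gp ε - gm (-ε) - (2*ε) • v)‖
            = 2⁻¹ * ‖gp ε - gm (-ε) - (2*ε) • v‖ := nsmul _ _ (by norm_num)
          _ ≤ 2⁻¹ * (2 * (M * ε * ε)) := mul_le_mul_of_nonneg_left nA (by norm_num)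
          _ = M * ε^2 := by ring
      have b2 : ‖(ε^3) • c 3‖ ≤ 3 * M * ε^2 := by
        rw [nsmul _ _ (by positivity)]; exact n3
      have b3 : ‖(ε^5) • c 5‖ ≤ M * ε^2 := by
        rw [nsmul _ _ (by positivity)]; exact n5
      calc ‖(2:ℝ)⁻¹ • (gp ε - gm (-ε) - (2*ε) • v) - (ε^3) • c 3 - (ε^5) • c 5‖
          ≤ ‖(2:ℝ)⁻¹ • (gp ε - gm (-ε) - (2*ε) • v)‖ + ‖(ε^3) • c 3‖ + ‖(ε^5) • c 5‖ := t
        _ ≤ M * ε^2 + 3 * M * ε^2 + M * ε^2 := by linarith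
        _ = ε * (5 * M * ε) := by ring
    exact le_of_mul_le_mul_left h hε0
  have n4 : ε^3 * ‖c 4‖ ≤ M * ε := by
    rw [← nsmul _ _ (by positivity), k4, nsmul _ _ (by norm_num)]
    have t := norm_sub_le (ε • (iteratedDeriv 2 gp ε + iteratedDeriv 2 gm (-ε)))
      ((deriv gp ε - v) - (deriv gm (-ε) - v))
    have b1 : ‖ε • (iteratedDeriv 2 gp ε + iteratedDeriv 2 gm (-ε))‖ ≤ 2 * (M * ε) := by
      calc ‖ε • (iteratedDeriv 2 gp ε + iteratedDeriv 2 gm (-ε))‖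
          = ε * ‖iteratedDeriv 2 gp ε + iteratedDeriv 2 gm (-ε)‖ := nsmul _ _ (le_of_lt hε0)
        _ ≤ ε * (2*M) := mul_le_mul_of_nonneg_left
            ((norm_add_le _ _).trans (by linarith)) (le_of_lt hε0)
        _ = 2 * (M * ε) := by ring
    have b2 : ‖(deriv gp ε - v) - (deriv gm (-ε) - v)‖ ≤ 2 * (M*ε) :=
      (norm_sub_le _ _).trans (by linarith)
    linarith
  have n2 : ε * ‖c 2‖ ≤ 3 * M * ε := by
    rw [← nsmul _ _ (le_of_lt hε0), k2, nsmul _ _ (by norm_num)]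
    have t := norm_sub_le ((deriv gp ε - v) - (deriv gm (-ε) - v)) ((8:ℝ) • ((ε^3) • c 4))
    have b1 : ‖(deriv gp ε - v) - (deriv gm (-ε) - v)‖ ≤ 2 * (M*ε) :=
      (norm_sub_le _ _).trans (by linarith)
    have b2 : ‖(8:ℝ) • ((ε^3) • c 4)‖ ≤ 8 * (M * ε) := by
      calc ‖(8:ℝ) • ((ε^3) • c 4)‖ = 8 * ‖(ε^3) • c 4‖ := nsmul _ _ (by norm_num)
        _ = 8 * (ε^3 * ‖c 4‖) := by rw [nsmul _ _ (by positivity)]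
        _ ≤ 8 * (M * ε) := by linarith
    linarith
  -- final estimate
  intro a ha
  have haa : |a| ≤ ε := abs_le.mpr ⟨ha.1, ha.2⟩
  have ha2 : a^2 ≤ ε^2 := by
    rw [← sq_abs a]
    exact pow_le_pow_left₀ (abs_nonneg a) haa 2
  have hda : deriv P a - v = (c 1 - v) + (2*a) • c 2 + (3*a^2) • c 3
      + (4*a^3) • c 4 + (5*a^4) • c 5 := by
    rw [(hP1 a).deriv]; module
  have tri5 : ∀ x1 x2 x3 x4 x5 : E,
      ‖x1+x2+x3+x4+x5‖ ≤ ‖x1‖+‖x2‖+‖x3‖+‖x4‖+‖x5‖ := by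
    intro x1 x2 x3 x4 x5
    calc ‖x1+x2+x3+x4+x5‖ ≤ ‖x1+x2+x3+x4‖+‖x5‖ := norm_add_le _ _
      _ ≤ ‖x1+x2+x3‖+‖x4‖+‖x5‖ := by gcongr; exact norm_add_le _ _
      _ ≤ ‖x1+x2‖+‖x3‖+‖x4‖+‖x5‖ := by gcongr; exact norm_add_le _ _
      _ ≤ ‖x1‖+‖x2‖+‖x3‖+‖x4‖+‖x5‖ := by gcongr; exact norm_add_le _ _
  have T : ‖deriv P a - v‖ ≤ ‖c 1 - v‖ + ‖(2*a) • c 2‖ + ‖(3*a^2) • c 3‖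
      + ‖(4*a^3) • c 4‖ + ‖(5*a^4) • c 5‖ := by
    rw [hda]; exact tri5 _ _ _ _ _
  -- individual bounds
  have t2 : ‖(2*a) • c 2‖ ≤ 6 * M * ε := by
    rw [norm_smul, Real.norm_eq_abs, abs_mul, abs_two]
    calc 2 * |a| * ‖c 2‖ = 2 * (|a| * ‖c 2‖) := by ring
      _ ≤ 2 * (ε * ‖c 2‖) := by
          have h' : |a| * ‖c 2‖ ≤ ε * ‖c 2‖ := mul_le_mul_of_nonneg_right haa (norm_nonneg _)
          linarith
      _ ≤ 2 * (3 * M * ε) := by linarith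
      _ = 6 * M * ε := by ring
  have h3div : ε^2 * ‖c 3‖ ≤ 3 * M * ε := by
    have h : ε * (ε^2 * ‖c 3‖) ≤ ε * (3 * M * ε) := by
      calc ε * (ε^2 * ‖c 3‖) = ε^3 * ‖c 3‖ := by ring
        _ ≤ 3 * M * ε^2 := n3
        _ = ε * (3 * M * ε) := by ring
    exact le_of_mul_le_mul_left h hε0
  have t3 : ‖(3*a^2) • c 3‖ ≤ 9 * M * ε := by
    rw [norm_smul, Real.norm_eq_abs, abs_mul, abs_of_nonneg (sq_nonneg a),
      show |(3:ℝ)| = 3 by norm_num]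
    calc 3 * a^2 * ‖c 3‖ = 3 * (a^2 * ‖c 3‖) := by ring
      _ ≤ 3 * (ε^2 * ‖c 3‖) := by
          have h' : a^2 * ‖c 3‖ ≤ ε^2 * ‖c 3‖ := mul_le_mul_of_nonneg_right ha2 (norm_nonneg _)
          linarith
      _ ≤ 3 * (3 * M * ε) := by linarith
      _ = 9 * M * ε := by ring
  have t4 : ‖(4*a^3) • c 4‖ ≤ 4 * M * ε := by
    rw [norm_smul, Real.norm_eq_abs, abs_mul, show |(4:ℝ)| = 4 by norm_num]
    have h3 : |a^3| ≤ ε^3 := by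
      rw [abs_pow]
      exact pow_le_pow_left₀ (abs_nonneg a) haa 3
    calc 4 * |a^3| * ‖c 4‖ = 4 * (|a^3| * ‖c 4‖) := by ring
      _ ≤ 4 * (ε^3 * ‖c 4‖) := by
          have h' : |a^3| * ‖c 4‖ ≤ ε^3 * ‖c 4‖ := mul_le_mul_of_nonneg_right h3 (norm_nonneg _)
          linarith
      _ ≤ 4 * (M * ε) := by linarith
      _ = 4 * M * ε := by ring
  have h5div : ε^4 * ‖c 5‖ ≤ M * ε := by
    have h : ε * (ε^4 * ‖c 5‖) ≤ ε * (M * ε) := by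
      calc ε * (ε^4 * ‖c 5‖) = ε^5 * ‖c 5‖ := by ring
        _ ≤ M * ε^2 := n5
        _ = ε * (M * ε) := by ring
    exact le_of_mul_le_mul_left h hε0
  have t5 : ‖(5*a^4) • c 5‖ ≤ 5 * M * ε := by
    rw [norm_smul, Real.norm_eq_abs, abs_mul, show |(5:ℝ)| = 5 by norm_num]
    have h4 : |a^4| ≤ ε^4 := by
      rw [abs_pow]
      exact pow_le_pow_left₀ (abs_nonneg a) haa 4
    calc 5 * |a^4| * ‖c 5‖ = 5 * (|a^4| * ‖c 5‖) := by ring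
      _ ≤ 5 * (ε^4 * ‖c 5‖) := by
          have h' : |a^4| * ‖c 5‖ ≤ ε^4 * ‖c 5‖ := mul_le_mul_of_nonneg_right h4 (norm_nonneg _)
          linarith
      _ ≤ 5 * (M * ε) := by linarith
      _ = 5 * M * ε := by ring
  calc ‖deriv P a - v‖ ≤ ‖c 1 - v‖ + ‖(2*a) • c 2‖ + ‖(3*a^2) • c 3‖
      + ‖(4*a^3) • c 4‖ + ‖(5*a^4) • c 5‖ := T
    _ ≤ 5*M*ε + 6*M*ε + 9*M*ε + 4*M*ε + 5*M*ε := by linarith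
    _ = 29 * M * ε := by ring
end

section
/- Define w : ℝ → ℝ by w(x) = (4 + 9x − 5x³)/8, so that w(−1) = 0 and w(1) = 1. There exists a constant C > 0 such that for every ε ∈ (0, 1], every quintic Hermite interpolant P of F on [−ε, ε], and every a ∈ [−ε, ε], one has ‖P''(a) − ( (1 − w(a/ε)) • g₋''(−ε) + w(a/ε) • g₊''(ε) )‖ ≤ C·ε; in particular P''(a) is, up to an error of order ε, an affine interpolation between the one-sided second derivatives F''(−ε) and F''(ε). -/
section helpers
variable {E : Type*} [NormedAddCommGroup E] [NormedSpace ℝ E]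

lemma c3_pack (g : ℝ → E) (hg : ContDiff ℝ 3 g) :
    Differentiable ℝ g ∧ Differentiable ℝ (deriv g) ∧ Differentiable ℝ (deriv (deriv g)) ∧
      Continuous (deriv (deriv (deriv g))) := by
  rw [show (3 : WithTop ℕ∞) = 2 + 1 by norm_num] at hg
  obtain ⟨h1, -, hg2⟩ := contDiff_succ_iff_deriv.mp hg
  rw [show (2 : WithTop ℕ∞) = 1 + 1 by norm_num] at hg2
  obtain ⟨h2, -, hg3⟩ := contDiff_succ_iff_deriv.mp hg2
  rw [show (1 : WithTop ℕ∞) = 0 + 1 by norm_num] at hg3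
  obtain ⟨h3, -, hg4⟩ := contDiff_succ_iff_deriv.mp hg3
  exact ⟨h1, h2, h3, contDiff_zero.mp hg4⟩

end helpers
section helpers2
variable {E : Type*} [NormedAddCommGroup E] [NormedSpace ℝ E]

lemma mvt_uIcc (f f' : ℝ → E) (hf : ∀ y, HasDerivAt f (f' y) y) {K : ℝ} {x : ℝ}
    (hb : ∀ y ∈ Set.uIcc (0:ℝ) x, ‖f' y‖ ≤ K) : ‖f x - f 0‖ ≤ K * |x| := by
  have h := (convex_uIcc (0:ℝ) x).norm_image_sub_le_of_norm_hasDerivWithin_le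
    (fun y _ => (hf y).hasDerivWithinAt) hb Set.left_mem_uIcc Set.right_mem_uIcc
  simpa [Real.norm_eq_abs] using h

lemma abs_le_of_mem_uIcc {x y : ℝ} (hy : y ∈ Set.uIcc (0:ℝ) x) : |y| ≤ |x| := by
  rw [Set.mem_uIcc] at hy
  rcases hy with ⟨h, h'⟩ | ⟨h, h'⟩ <;> rw [abs_le] <;>
    constructor <;> nlinarith [le_abs_self x, neg_abs_le x]

lemma taylor3 (g : ℝ → E) (hg : ContDiff ℝ 3 g) {M : ℝ}
    (hM : ∀ y ∈ Set.Icc (-1:ℝ) 1, ‖deriv (deriv (deriv g)) y‖ ≤ M) :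
    ∀ x ∈ Set.Icc (-1:ℝ) 1,
      ‖deriv (deriv g) x - deriv (deriv g) 0‖ ≤ M * |x| ∧
      ‖deriv g x - (deriv g 0 + x • deriv (deriv g) 0)‖ ≤ M * |x| ^ 2 ∧
      ‖g x - (g 0 + x • deriv g 0 + (x ^ 2 / 2) • deriv (deriv g) 0)‖ ≤ M * |x| ^ 3 := by
  obtain ⟨h1, h2, h3, _⟩ := c3_pack g hg
  have hsub : ∀ x ∈ Set.Icc (-1:ℝ) 1, Set.uIcc (0:ℝ) x ⊆ Set.Icc (-1:ℝ) 1 := fun x hx =>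
    Set.uIcc_subset_Icc (by norm_num) hx
  have step1 : ∀ x ∈ Set.Icc (-1:ℝ) 1,
      ‖deriv (deriv g) x - deriv (deriv g) 0‖ ≤ M * |x| := by
    intro x hx
    exact mvt_uIcc _ _ (fun y => (h3 y).hasDerivAt) (fun y hy => hM y (hsub x hx hy))
  have step2 : ∀ x ∈ Set.Icc (-1:ℝ) 1,
      ‖deriv g x - (deriv g 0 + x • deriv (deriv g) 0)‖ ≤ M * |x| ^ 2 := by
    intro x hx
    have key := mvt_uIcc (fun y => deriv g y - y • deriv (deriv g) 0)
      (fun y => deriv (deriv g) y - deriv (deriv g) 0)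
      (fun y => ((h2 y).hasDerivAt).sub
        (by simpa using (hasDerivAt_id y).smul_const (deriv (deriv g) 0)))
      (K := M * |x|)
      (fun y hy => (step1 y (hsub x hx hy)).trans
        (by have := abs_le_of_mem_uIcc hy
            have hM0 : 0 ≤ M := le_trans (norm_nonneg _) (hM 0 (by norm_num))
            nlinarith))
    have heq : deriv g x - x • deriv (deriv g) 0 -
        (deriv g 0 - (0:ℝ) • deriv (deriv g) 0) =
        deriv g x - (deriv g 0 + x • deriv (deriv g) 0) := by module
    rw [heq] at key
    calc ‖deriv g x - (deriv g 0 + x • deriv (deriv g) 0)‖ ≤ M * |x| * |x| := key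
    _ = M * |x| ^ 2 := by ring
  intro x hx
  refine ⟨step1 x hx, step2 x hx, ?_⟩
  have key := mvt_uIcc (fun y => g y - y • deriv g 0 - (y ^ 2 / 2) • deriv (deriv g) 0)
    (fun y => deriv g y - (deriv g 0 + y • deriv (deriv g) 0))
    (fun y => by
      have ha : HasDerivAt (fun y : ℝ => (y ^ 2 / 2) • deriv (deriv g) 0)
          (y • deriv (deriv g) 0) y := by
        have := ((hasDerivAt_pow 2 y).div_const 2).smul_const (deriv (deriv g) 0)
        convert this using 2
        push_cast; ring
      have hb : HasDerivAt (fun y : ℝ => g y - y • deriv g 0)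
          (deriv g y - deriv g 0) y :=
        ((h1 y).hasDerivAt).sub (by simpa using (hasDerivAt_id y).smul_const (deriv g 0))
      have := hb.sub ha
      convert this using 1
      · rfl
      · module)
    (K := M * |x| ^ 2)
    (fun y hy => (step2 y (hsub x hx hy)).trans
      (by have := abs_le_of_mem_uIcc hy
          have hM0 : 0 ≤ M := le_trans (norm_nonneg _) (hM 0 (by norm_num))
          exact mul_le_mul_of_nonneg_left (pow_le_pow_left₀ (abs_nonneg y) this 2) hM0))
  have heq : g x - x • deriv g 0 - (x ^ 2 / 2) • deriv (deriv g) 0 -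
      (g 0 - (0:ℝ) • deriv g 0 - ((0:ℝ) ^ 2 / 2) • deriv (deriv g) 0) =
      g x - (g 0 + x • deriv g 0 + (x ^ 2 / 2) • deriv (deriv g) 0) := by
    module
  rw [heq] at key
  calc ‖g x - (g 0 + x • deriv g 0 + (x ^ 2 / 2) • deriv (deriv g) 0)‖
      ≤ M * |x| ^ 2 * |x| := key
  _ = M * |x| ^ 3 := by ring

end helpers2
section helpers3
variable {E : Type*} [NormedAddCommGroup E] [NormedSpace ℝ E]

lemma poly6_derivs (c : Fin 6 → E) (P : ℝ → E)
    (hP : ∀ a : ℝ, P a = ∑ j : Fin 6, a ^ (j : ℕ) • c j) :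
    (∀ x : ℝ, P x = c 0 + x • c 1 + (x ^ 2) • c 2 + (x ^ 3) • c 3 + (x ^ 4) • c 4
        + (x ^ 5) • c 5) ∧
    (∀ x : ℝ, deriv P x = c 1 + (2 * x) • c 2 + (3 * x ^ 2) • c 3 + (4 * x ^ 3) • c 4
        + (5 * x ^ 4) • c 5) ∧
    (∀ x : ℝ, iteratedDeriv 2 P x = (2 : ℝ) • c 2 + (6 * x) • c 3 + (12 * x ^ 2) • c 4
        + (20 * x ^ 3) • c 5) := by
  have hPfun : ∀ x : ℝ, P x = c 0 + x • c 1 + (x ^ 2) • c 2 + (x ^ 3) • c 3 + (x ^ 4) • c 4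
      + (x ^ 5) • c 5 := by
    intro x
    rw [hP, Fin.sum_univ_six]
    norm_num [show ((3:Fin 6):ℕ)=3 from rfl, show ((4:Fin 6):ℕ)=4 from rfl,
      show ((5:Fin 6):ℕ)=5 from rfl]
  have hd1 : ∀ x : ℝ, HasDerivAt P
      (c 1 + (2 * x) • c 2 + (3 * x ^ 2) • c 3 + (4 * x ^ 3) • c 4 + (5 * x ^ 4) • c 5) x := by
    intro x
    have h : HasDerivAt (fun x : ℝ => c 0 + x • c 1 + (x ^ 2) • c 2 + (x ^ 3) • c 3
        + (x ^ 4) • c 4 + (x ^ 5) • c 5)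
        (c 1 + (2 * x) • c 2 + (3 * x ^ 2) • c 3 + (4 * x ^ 3) • c 4 + (5 * x ^ 4) • c 5) x := by
      have h0 := hasDerivAt_const x (c 0)
      have h1 := (hasDerivAt_id x).smul_const (c 1)
      have h2 := (hasDerivAt_pow 2 x).smul_const (c 2)
      have h3 := (hasDerivAt_pow 3 x).smul_const (c 3)
      have h4 := (hasDerivAt_pow 4 x).smul_const (c 4)
      have h5 := (hasDerivAt_pow 5 x).smul_const (c 5)
      have := ((((h0.add h1).add h2).add h3).add h4).add h5
      convert this using 1
      · rfl
      · push_cast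
        module
    exact h.congr_of_eventuallyEq (Filter.Eventually.of_forall fun y => hPfun y)
  have hderiv : ∀ x : ℝ, deriv P x = c 1 + (2 * x) • c 2 + (3 * x ^ 2) • c 3 + (4 * x ^ 3) • c 4
      + (5 * x ^ 4) • c 5 := fun x => (hd1 x).deriv
  have hd2 : ∀ x : ℝ, HasDerivAt (deriv P)
      ((2 : ℝ) • c 2 + (6 * x) • c 3 + (12 * x ^ 2) • c 4 + (20 * x ^ 3) • c 5) x := by
    intro x
    have h : HasDerivAt (fun x : ℝ => c 1 + (2 * x) • c 2 + (3 * x ^ 2) • c 3 + (4 * x ^ 3) • c 4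
        + (5 * x ^ 4) • c 5)
        ((2 : ℝ) • c 2 + (6 * x) • c 3 + (12 * x ^ 2) • c 4 + (20 * x ^ 3) • c 5) x := by
      have h0 := hasDerivAt_const x (c 1)
      have h2 := (((hasDerivAt_id x).const_mul (2:ℝ))).smul_const (c 2)
      have h3 := (((hasDerivAt_pow 2 x).const_mul (3:ℝ))).smul_const (c 3)
      have h4 := (((hasDerivAt_pow 3 x).const_mul (4:ℝ))).smul_const (c 4)
      have h5 := (((hasDerivAt_pow 4 x).const_mul (5:ℝ))).smul_const (c 5)
      have := (((h0.add h2).add h3).add h4).add h5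
      convert this using 1
      · rfl
      · push_cast
        module
    exact h.congr_of_eventuallyEq (Filter.Eventually.of_forall fun y => hderiv y)
  have hiter : iteratedDeriv 2 P = deriv (deriv P) := by
    rw [iteratedDeriv_succ, iteratedDeriv_one]
  exact ⟨hPfun, hderiv, fun x => by rw [hiter]; exact (hd2 x).deriv⟩

end helpers3
lemma cubic_bound1 {t : ℝ} (h : -1 ≤ t) (h' : t ≤ 1) : |15/4*(t - t^3)| ≤ 15/2 := by
  have h1 : (0:ℝ) ≤ (1 + t) * (1 - t) ^ 2 := mul_nonneg (by linarith) (sq_nonneg _)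
  have h2 : (0:ℝ) ≤ (1 - t) * (1 + t) ^ 2 := mul_nonneg (by linarith) (sq_nonneg _)
  rw [abs_le]; constructor <;> nlinarith [sq_nonneg t]
lemma cubic_bound2 {t : ℝ} (h : -1 ≤ t) (h' : t ≤ 1) :
    |(-3/4 + 15/4*t + 3/4*t^2 - 15/4*t^3)| ≤ 9 := by
  have h1 : (0:ℝ) ≤ (1 + t) * (1 - t) ^ 2 := mul_nonneg (by linarith) (sq_nonneg _)
  have h2 : (0:ℝ) ≤ (1 - t) * (1 + t) ^ 2 := mul_nonneg (by linarith) (sq_nonneg _)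
  rw [abs_le]; constructor <;> nlinarith [sq_nonneg t]
lemma cubic_bound3 {t : ℝ} (h : -1 ≤ t) (h' : t ≤ 1) :
    |(3/4 + 15/4*t - 3/4*t^2 - 15/4*t^3)| ≤ 9 := by
  have h1 : (0:ℝ) ≤ (1 + t) * (1 - t) ^ 2 := mul_nonneg (by linarith) (sq_nonneg _)
  have h2 : (0:ℝ) ≤ (1 - t) * (1 + t) ^ 2 := mul_nonneg (by linarith) (sq_nonneg _)
  rw [abs_le]; constructor <;> nlinarith [sq_nonneg t]
lemma cubic_bound4 {t : ℝ} (h : -1 ≤ t) (h' : t ≤ 1) :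
    |(-3/4 + 15/8*t + 3/4*t^2 - 15/8*t^3)| ≤ 21/4 := by
  have h1 : (0:ℝ) ≤ (1 + t) * (1 - t) ^ 2 := mul_nonneg (by linarith) (sq_nonneg _)
  have h2 : (0:ℝ) ≤ (1 - t) * (1 + t) ^ 2 := mul_nonneg (by linarith) (sq_nonneg _)
  rw [abs_le]; constructor <;> nlinarith [sq_nonneg t]
lemma cubic_bound5 {t : ℝ} (h : -1 ≤ t) (h' : t ≤ 1) :
    |(-3/4 - 15/8*t + 3/4*t^2 + 15/8*t^3)| ≤ 21/4 := by
  have h1 : (0:ℝ) ≤ (1 + t) * (1 - t) ^ 2 := mul_nonneg (by linarith) (sq_nonneg _)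
  have h2 : (0:ℝ) ≤ (1 - t) * (1 + t) ^ 2 := mul_nonneg (by linarith) (sq_nonneg _)
  rw [abs_le]; constructor <;> nlinarith [sq_nonneg t]

set_option maxHeartbeats 1000000 in
/-- **Second-order estimate for quintic Hermite smoothing (Lemma `secondorder`, part 3).**
Define `w x = (4 + 9x − 5x³)/8`, so `w (−1) = 0` and `w 1 = 1`. With `g₋, g₊, F` as
before (`C³`, matching value and first derivative at `0`), there is `C > 0` such that
for every `ε ∈ (0,1]`, every quintic Hermite interpolant `P` of `F` on `[−ε, ε]`, and
every `a ∈ [−ε, ε]`,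
`‖P''(a) − ( (1 − w(a/ε)) • g₋''(−ε) + w(a/ε) • g₊''(ε) )‖ ≤ C·ε`;
i.e. `P''(a)` is, up to an error of order `ε`, an affine interpolation between the
one-sided second derivatives `F''(−ε)` and `F''(ε)`. -/
theorem quintic_hermite_second_deriv_estimate
    {E : Type*} [NormedAddCommGroup E] [NormedSpace ℝ E]
    (gm gp : ℝ → E) (hgm : ContDiff ℝ 3 gm) (hgp : ContDiff ℝ 3 gp)
    (h0 : gm 0 = gp 0) (h1 : deriv gm 0 = deriv gp 0)
    (F : ℝ → E) (hFm : ∀ a : ℝ, a ≤ 0 → F a = gm a) (hFp : ∀ a : ℝ, 0 ≤ a → F a = gp a)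
    (w : ℝ → ℝ) (hw : ∀ x : ℝ, w x = (4 + 9 * x - 5 * x ^ 3) / 8) :
    ∃ C > 0, ∀ ε ∈ Set.Ioc (0 : ℝ) 1, ∀ P : ℝ → E,
      ((∃ c : Fin 6 → E, ∀ a : ℝ, P a = ∑ j : Fin 6, a ^ (j : ℕ) • c j) ∧
        P (-ε) = F (-ε) ∧ P ε = F ε ∧
        deriv P (-ε) = deriv gm (-ε) ∧ deriv P ε = deriv gp ε ∧
        iteratedDeriv 2 P (-ε) = iteratedDeriv 2 gm (-ε) ∧
        iteratedDeriv 2 P ε = iteratedDeriv 2 gp ε) →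
      ∀ a ∈ Set.Icc (-ε) ε,
        ‖iteratedDeriv 2 P a -
            ((1 - w (a / ε)) • iteratedDeriv 2 gm (-ε) + w (a / ε) • iteratedDeriv 2 gp ε)‖
          ≤ C * ε := by
  obtain ⟨hm1, hm2, hm3, hmc⟩ := c3_pack gm hgm
  obtain ⟨hp1, hp2, hp3, hpc⟩ := c3_pack gp hgp
  obtain ⟨M₁, hM₁⟩ := (isCompact_Icc (a := (-1:ℝ)) (b := 1)).exists_bound_of_continuousOn
    hmc.continuousOn
  obtain ⟨M₂, hM₂⟩ := (isCompact_Icc (a := (-1:ℝ)) (b := 1)).exists_bound_of_continuousOn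
    hpc.continuousOn
  set M : ℝ := max (max M₁ M₂) 0 with hMdef
  have hM0 : 0 ≤ M := le_max_right _ _
  have hMm : ∀ y ∈ Set.Icc (-1:ℝ) 1, ‖deriv (deriv (deriv gm)) y‖ ≤ M :=
    fun y hy => (hM₁ y hy).trans ((le_max_left _ _).trans (le_max_left _ _))
  have hMp : ∀ y ∈ Set.Icc (-1:ℝ) 1, ‖deriv (deriv (deriv gp)) y‖ ≤ M :=
    fun y hy => (hM₂ y hy).trans ((le_max_right _ _).trans (le_max_left _ _))
  have Tm := taylor3 gm hgm hMm
  have Tp := taylor3 gp hgp hMp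
  refine ⟨44 * (M + 1), by positivity, ?_⟩
  rintro ε ⟨hε0, hε1⟩ P ⟨⟨c, hc⟩, hPm, hPp, hD1m, hD1p, hD2m, hD2p⟩ a ha
  obtain ⟨hPfun, hderiv, hiter2⟩ := poly6_derivs c P hc
  have hεne : ε ≠ 0 := ne_of_gt hε0
  obtain ⟨tm1, tm2, tm3⟩ := Tm (-ε) ⟨by linarith, by linarith⟩
  obtain ⟨tp1, tp2, tp3⟩ := Tp ε ⟨by linarith, by linarith⟩
  rw [← h0, ← h1] at tp3
  rw [← h1] at tp2
  have habs : |(-ε:ℝ)| = ε := by rw [abs_neg, abs_of_pos hε0]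
  have habs' : |ε| = ε := abs_of_pos hε0
  rw [habs] at tm1 tm2 tm3
  rw [habs'] at tp1 tp2 tp3
  have hit : ∀ (f : ℝ → E), iteratedDeriv 2 f = deriv (deriv f) := fun f => by
    rw [iteratedDeriv_succ, iteratedDeriv_one]
  -- the six Hermite equations in terms of the coefficients c
  have e1 : gm (-ε) = c 0 + (-ε) • c 1 + ((-ε) ^ 2) • c 2 + ((-ε) ^ 3) • c 3
      + ((-ε) ^ 4) • c 4 + ((-ε) ^ 5) • c 5 := by
    rw [← hFm (-ε) (by linarith), ← hPm]; exact hPfun (-ε)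
  have e2 : gp ε = c 0 + ε • c 1 + (ε ^ 2) • c 2 + (ε ^ 3) • c 3 + (ε ^ 4) • c 4
      + (ε ^ 5) • c 5 := by
    rw [← hFp ε (le_of_lt hε0), ← hPp]; exact hPfun ε
  have e3 : deriv gm (-ε) = c 1 + (2 * (-ε)) • c 2 + (3 * (-ε) ^ 2) • c 3
      + (4 * (-ε) ^ 3) • c 4 + (5 * (-ε) ^ 4) • c 5 := by
    rw [← hD1m]; exact hderiv (-ε)
  have e4 : deriv gp ε = c 1 + (2 * ε) • c 2 + (3 * ε ^ 2) • c 3 + (4 * ε ^ 3) • c 4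
      + (5 * ε ^ 4) • c 5 := by
    rw [← hD1p]; exact hderiv ε
  have e5 : deriv (deriv gm) (-ε) = (2:ℝ) • c 2 + (6 * (-ε)) • c 3 + (12 * (-ε) ^ 2) • c 4
      + (20 * (-ε) ^ 3) • c 5 := by
    rw [← hit gm, ← hD2m]; exact hiter2 (-ε)
  have e6 : deriv (deriv gp) ε = (2:ℝ) • c 2 + (6 * ε) • c 3 + (12 * ε ^ 2) • c 4
      + (20 * ε ^ 3) • c 5 := by
    rw [← hit gp, ← hD2p]; exact hiter2 ε
  set t : ℝ := a / ε with htdef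
  have hta : a = ε * t := by rw [htdef]; field_simp
  have ht1 : |t| ≤ 1 := by
    have haa : |a| ≤ ε := abs_le.mpr ⟨ha.1, ha.2⟩
    rw [htdef, abs_div, habs', div_le_one hε0]
    exact haa
  obtain ⟨htl, htr⟩ := abs_le.mp ht1
  -- the remainder vectors
  set R1 : E := gm (-ε) - (gm 0 + (-ε) • deriv gm 0 + ((-ε) ^ 2 / 2) • deriv (deriv gm) 0)
    with hR1
  set R2 : E := gp ε - (gm 0 + ε • deriv gm 0 + (ε ^ 2 / 2) • deriv (deriv gp) 0) with hR2
  set R3 : E := deriv gm (-ε) - (deriv gm 0 + (-ε) • deriv (deriv gm) 0) with hR3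
  set R4 : E := deriv gp ε - (deriv gm 0 + ε • deriv (deriv gp) 0) with hR4
  set R5 : E := deriv (deriv gm) (-ε) - deriv (deriv gm) 0 with hR5
  set R6 : E := deriv (deriv gp) ε - deriv (deriv gp) 0 with hR6
  -- the key algebraic identity
  have key : iteratedDeriv 2 P a -
      ((1 - w (a / ε)) • iteratedDeriv 2 gm (-ε) + w (a / ε) • iteratedDeriv 2 gp ε)
      = (15 / 4 * (t - t ^ 3) / ε ^ 2) • (R1 - R2)
        + ((-3 / 4 + 15 / 4 * t + 3 / 4 * t ^ 2 - 15 / 4 * t ^ 3) / ε) • R3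
        + ((3 / 4 + 15 / 4 * t - 3 / 4 * t ^ 2 - 15 / 4 * t ^ 3) / ε) • R4
        + (-3 / 4 + 15 / 8 * t + 3 / 4 * t ^ 2 - 15 / 8 * t ^ 3) • R5
        + (-3 / 4 - 15 / 8 * t + 3 / 4 * t ^ 2 + 15 / 8 * t ^ 3) • R6 := by
    rw [hit gm, hit gp, hiter2 a, hw, ← htdef, hR1, hR2, hR3, hR4, hR5, hR6,
      e1, e2, e3, e4, e5, e6, hta]
    match_scalars <;> (try field_simp) <;> ring
  rw [key]
  have n1 : ‖(15 / 4 * (t - t ^ 3) / ε ^ 2) • (R1 - R2)‖ ≤ 15 * (M * ε) := by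
    rw [norm_smul, Real.norm_eq_abs]
    have hc1 : |15 / 4 * (t - t ^ 3) / ε ^ 2| ≤ 15 / 2 / ε ^ 2 := by
      rw [abs_div, abs_of_pos (pow_pos hε0 2)]
      gcongr
      exact cubic_bound1 htl htr
    have hRn : ‖R1 - R2‖ ≤ M * ε ^ 3 + M * ε ^ 3 := (norm_sub_le _ _).trans (add_le_add tm3 tp3)
    calc |15 / 4 * (t - t ^ 3) / ε ^ 2| * ‖R1 - R2‖
        ≤ 15 / 2 / ε ^ 2 * (M * ε ^ 3 + M * ε ^ 3) :=
          mul_le_mul hc1 hRn (norm_nonneg _) (by positivity)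
      _ = 15 * (M * ε) := by field_simp; ring
  have n3 : ‖((-3 / 4 + 15 / 4 * t + 3 / 4 * t ^ 2 - 15 / 4 * t ^ 3) / ε) • R3‖
      ≤ 9 * (M * ε) := by
    rw [norm_smul, Real.norm_eq_abs]
    have hc : |(-3 / 4 + 15 / 4 * t + 3 / 4 * t ^ 2 - 15 / 4 * t ^ 3) / ε| ≤ 9 / ε := by
      rw [abs_div, abs_of_pos hε0]
      gcongr
      exact cubic_bound2 htl htr
    calc |(-3 / 4 + 15 / 4 * t + 3 / 4 * t ^ 2 - 15 / 4 * t ^ 3) / ε| * ‖R3‖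
        ≤ 9 / ε * (M * ε ^ 2) := mul_le_mul hc tm2 (norm_nonneg _) (by positivity)
      _ = 9 * (M * ε) := by field_simp
  have n4 : ‖((3 / 4 + 15 / 4 * t - 3 / 4 * t ^ 2 - 15 / 4 * t ^ 3) / ε) • R4‖
      ≤ 9 * (M * ε) := by
    rw [norm_smul, Real.norm_eq_abs]
    have hc : |(3 / 4 + 15 / 4 * t - 3 / 4 * t ^ 2 - 15 / 4 * t ^ 3) / ε| ≤ 9 / ε := by
      rw [abs_div, abs_of_pos hε0]
      gcongr
      exact cubic_bound3 htl htr
    calc |(3 / 4 + 15 / 4 * t - 3 / 4 * t ^ 2 - 15 / 4 * t ^ 3) / ε| * ‖R4‖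
        ≤ 9 / ε * (M * ε ^ 2) := mul_le_mul hc tp2 (norm_nonneg _) (by positivity)
      _ = 9 * (M * ε) := by field_simp
  have n5 : ‖(-3 / 4 + 15 / 8 * t + 3 / 4 * t ^ 2 - 15 / 8 * t ^ 3) • R5‖
      ≤ 21 / 4 * (M * ε) := by
    rw [norm_smul, Real.norm_eq_abs]
    have hc : |(-3 / 4 + 15 / 8 * t + 3 / 4 * t ^ 2 - 15 / 8 * t ^ 3)| ≤ 21 / 4 :=
      cubic_bound4 htl htr
    exact mul_le_mul hc tm1 (norm_nonneg _) (by norm_num)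
  have n6 : ‖(-3 / 4 - 15 / 8 * t + 3 / 4 * t ^ 2 + 15 / 8 * t ^ 3) • R6‖
      ≤ 21 / 4 * (M * ε) := by
    rw [norm_smul, Real.norm_eq_abs]
    have hc : |(-3 / 4 - 15 / 8 * t + 3 / 4 * t ^ 2 + 15 / 8 * t ^ 3)| ≤ 21 / 4 :=
      cubic_bound5 htl htr
    exact mul_le_mul hc tp1 (norm_nonneg _) (by norm_num)
  refine le_trans ((norm_add_le _ _).trans (add_le_add ((norm_add_le _ _).trans
    (add_le_add ((norm_add_le _ _).trans (add_le_add ((norm_add_le _ _).trans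
    (add_le_add n1 n3)) n4)) n5)) n6)) ?_
  nlinarith [mul_nonneg hM0 hε0.le, hε0.le]
end

section
/- For every real number r with 0 < r < π/4, there exist angles θ₀ ∈ (0, π/2) and θᵣ ∈ (π/2, π) such that sin θ₀ · sin r = sin(2r) · √(1 − (sin θᵣ · sin θ₀ · cos r − cos θᵣ · cos θ₀)²). -/
/-- **Spherical trigonometric existence claim from the proof of Lemma 3.2.**
For every `0 < r < π/4` there exist angles `θ₀ ∈ (0, π/2)` and `θᵣ ∈ (π/2, π)` such
that `sin θ₀ · sin r = sin (2r) · √(1 − (sin θᵣ · sin θ₀ · cos r − cos θᵣ · cos θ₀)²)`;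
i.e. the side `z` of the spherical triangle determined by the side `r` and adjacent
angles `θ₀`, `θᵣ` satisfies `sin z = sin (2r)`, so `z = 2r` can be arranged. -/
theorem spherical_triangle_side_eq_two_r
    (r : ℝ) (hr0 : 0 < r) (hr : r < Real.pi / 4) :
    ∃ θ₀ ∈ Set.Ioo 0 (Real.pi / 2), ∃ θr ∈ Set.Ioo (Real.pi / 2) Real.pi,
      Real.sin θ₀ * Real.sin r =
        Real.sin (2 * r) *
          Real.sqrt (1 -
            (Real.sin θr * Real.sin θ₀ * Real.cos r - Real.cos θr * Real.cos θ₀) ^ 2) := by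
  have hπ := Real.pi_pos
  set c := Real.cos r with hc_def
  clear_value c
  -- cos r > √2/2, so c² > 1/2
  have hc_gt : Real.cos (Real.pi / 4) < c := by
    rw [hc_def]
    apply Real.cos_lt_cos_of_nonneg_of_le_pi (by positivity) (by linarith [Real.pi_pos]) hr
  have hcos4 : Real.cos (Real.pi / 4) = Real.sqrt 2 / 2 := Real.cos_pi_div_four
  have hsqrt2 : (1:ℝ) < Real.sqrt 2 := by
    have : (1:ℝ) < 2 := one_lt_two
    nlinarith [Real.sq_sqrt (by norm_num : (2:ℝ) ≥ 0), Real.sqrt_nonneg 2]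
  have hc0 : 0 < c := by rw [hc_def]; exact Real.cos_pos_of_mem_Ioo ⟨by linarith, by linarith⟩
  have hc2 : 1 / 2 < c ^ 2 := by
    have h1 : Real.sqrt 2 / 2 < c := by rw [← hcos4]; exact hc_gt
    nlinarith [Real.sq_sqrt (by norm_num : (2:ℝ) ≥ 0), Real.sqrt_nonneg 2]
  have hc1 : c ≤ 1 := hc_def ▸ Real.cos_le_one r
  -- key: 4c⁴ + 1 > 4c²  (since (2c²-1)² > 0)
  have hkey : 4 * c ^ 2 < 4 * c ^ 4 + 1 := by nlinarith
  set a : ℝ := 4 * c ^ 2 / (4 * c ^ 4 + 1) with ha_def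
  clear_value a
  have hden : (0:ℝ) < 4 * c ^ 4 + 1 := by positivity
  have ha0 : 0 < a := by rw [ha_def]; positivity
  have ha1 : a < 1 := by rw [ha_def, div_lt_one hden]; linarith
  set s : ℝ := Real.sqrt ((1 + a) / 2) with hs_def
  clear_value s
  have hs0 : 0 < s := by rw [hs_def]; exact Real.sqrt_pos.2 (by linarith)
  have hs_sq : s ^ 2 = (1 + a) / 2 := by rw [hs_def]; exact Real.sq_sqrt (by linarith)
  have hs1 : s < 1 := by
    rw [hs_def]
    exact (Real.sqrt_lt' one_pos).2 (by nlinarith)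
  have hs_sq_lt : a < s ^ 2 := by rw [hs_sq]; linarith
  have hs_sq1 : s ^ 2 < 1 := by nlinarith
  -- θ₀ := arcsin s
  refine ⟨Real.arcsin s, ⟨Real.arcsin_pos.2 hs0, Real.arcsin_lt_pi_div_two.2 hs1⟩, ?_⟩
  have hsin0 : Real.sin (Real.arcsin s) = s := Real.sin_arcsin (by linarith) (le_of_lt hs1)
  have hcos0 : Real.cos (Real.arcsin s) = Real.sqrt (1 - s ^ 2) := Real.cos_arcsin s
  -- target value of the spherical cosine
  have h4c2 : (1:ℝ) < 4 * c ^ 2 := by nlinarith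
  have hXpos : 0 < 1 - s ^ 2 / (4 * c ^ 2) := by
    rw [sub_pos, div_lt_one (by positivity)]
    nlinarith
  set cstar : ℝ := Real.sqrt (1 - s ^ 2 / (4 * c ^ 2)) with hcstar_def
  clear_value cstar
  have hcstar_sq : cstar ^ 2 = 1 - s ^ 2 / (4 * c ^ 2) := by rw [hcstar_def]; exact Real.sq_sqrt (le_of_lt hXpos)
  -- g(π/2) = s * c > cstar
  have hupper : cstar < s * c := by
    rw [hcstar_def]
    refine (Real.sqrt_lt' (by positivity)).2 ?_
    have hmain : 4 * c ^ 2 < s ^ 2 * (4 * c ^ 4 + 1) := by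
      calc 4 * c ^ 2 = a * (4 * c ^ 4 + 1) := by rw [ha_def]; field_simp
        _ < s ^ 2 * (4 * c ^ 4 + 1) := by
            exact mul_lt_mul_of_pos_right hs_sq_lt hden
    have h4pos : (0:ℝ) < 4 * c ^ 2 := by positivity
    have hrw : 1 - s ^ 2 / (4 * c ^ 2) = (4 * c ^ 2 - s ^ 2) / (4 * c ^ 2) := by
      field_simp
    rw [hrw, div_lt_iff₀ h4pos]
    nlinarith [hmain]
  -- g(π) = √(1-s²) < cstar
  have hlower : Real.sqrt (1 - s ^ 2) < cstar := by
    rw [hcstar_def]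
    apply Real.sqrt_lt_sqrt (by linarith)
    have h45 : s ^ 2 / (4 * c ^ 2) < s ^ 2 := by
      rw [div_lt_iff₀ (by positivity)]
      calc s ^ 2 = s ^ 2 * 1 := (mul_one _).symm
        _ < s ^ 2 * (4 * c ^ 2) := by
            exact mul_lt_mul_of_pos_left h4c2 (by positivity)
    linarith
  -- intermediate value theorem for g
  set g : ℝ → ℝ := fun θ => Real.sin θ * s * c - Real.cos θ * Real.sqrt (1 - s ^ 2) with hg_def
  have hgcont : ContinuousOn g (Set.Icc (Real.pi / 2) Real.pi) := by
    apply Continuous.continuousOn; fun_prop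
  have hgπ2 : g (Real.pi / 2) = s * c := by
    simp [hg_def, Real.sin_pi_div_two, Real.cos_pi_div_two]
  have hgπ : g Real.pi = Real.sqrt (1 - s ^ 2) := by
    simp [hg_def, Real.sin_pi, Real.cos_pi]
  have hmem : cstar ∈ Set.Ioo (g Real.pi) (g (Real.pi / 2)) := by
    rw [hgπ, hgπ2]; exact ⟨hlower, hupper⟩
  have hsub := intermediate_value_Ioo' (by linarith : Real.pi / 2 ≤ Real.pi) hgcont
  obtain ⟨θr, hθr_mem, hθr_eq⟩ := hsub hmem
  refine ⟨θr, hθr_mem, ?_⟩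
  rw [hsin0, hcos0]
  have hval : Real.sin θr * s * c - Real.cos θr * Real.sqrt (1 - s ^ 2) = cstar := hθr_eq
  rw [hval]
  rw [hcstar_sq]
  have h1c : 1 - (1 - s ^ 2 / (4 * c ^ 2)) = s ^ 2 / (4 * c ^ 2) := by ring
  rw [h1c]
  have hsqrt : Real.sqrt (s ^ 2 / (4 * c ^ 2)) = s / (2 * c) := by
    rw [show s ^ 2 / (4 * c ^ 2) = (s / (2 * c)) ^ 2 by ring, Real.sqrt_sq (by positivity)]
  rw [hsqrt, Real.sin_two_mul, ← hc_def]
  field_simp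
end
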